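/- arXiv:2003.03953 — 4 statements merged into one kernel-verified Lean document; each statement's English description precedes it below -/
import Mathlib

section
/- Let R be a nonzero commutative Noetherian ring and n a positive integer. Then ir(R) = ir(R[x_1, …, x_n]) = ir(R[[x_1, …, x_n]]), where R[x_1, …, x_n] is the polynomial ring and R[[x_1, …, x_n]] is the formal power series ring in n variables over R. -/
/-- A submodule `N` of `M` is irreducible if it is proper and cannot be written as the
intersection of two submodules strictly containing it. -/
def IsIrredSubmodule (R M : Type*) [CommRing R] [AddCommGroup M] [Module R M]
    (N : Submodule R M) : Prop :=
  N ≠ ⊤ ∧ ∀ N₁ N₂ : Submodule R M, N₁ ⊓ N₂ = N → N₁ = N ∨ N₂ = N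

open Classical in
/-- The reducibility index `ir_R(M)`: the number of components in an irredundant
decomposition of the zero submodule of `M` as an intersection of irreducible submodules. -/
noncomputable def irIndex (R M : Type*) [CommRing R] [AddCommGroup M] [Module R M] : ℕ :=
  sInf {n | ∃ T : Finset (Submodule R M), T.card = n ∧ (∀ N ∈ T, IsIrredSubmodule R M N) ∧
    T.inf id = ⊥ ∧ ∀ N ∈ T, (T.erase N).inf id ≠ ⊥}

universe udsu

namespace IrIndexProof

open Classical

variable {A : Type*} [CommRing A] {M : Type*} [AddCommGroup M] [Module A M]

/-- A submodule is uniform if any two nonzero submodules of it intersect nontrivially. -/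
def IsUnif (U : Submodule A M) : Prop :=
  ∀ K₁ K₂ : Submodule A M, K₁ ≤ U → K₂ ≤ U → K₁ ≠ ⊥ → K₂ ≠ ⊥ → K₁ ⊓ K₂ ≠ ⊥

/-- `V` is an essential submodule of `U`. -/
def EssIn (V U : Submodule A M) : Prop :=
  V ≤ U ∧ ∀ K : Submodule A M, K ≤ U → K ≠ ⊥ → V ⊓ K ≠ ⊥

lemma EssIn.trans {P Q R' : Submodule A M} (h1 : EssIn P Q) (h2 : EssIn Q R') :
    EssIn P R' := by
  refine ⟨h1.1.trans h2.1, fun K hK hKne hcon => ?_⟩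
  exact h1.2 (Q ⊓ K) inf_le_left (h2.2 K hK hKne)
    (le_bot_iff.mp (hcon ▸ le_inf inf_le_left (inf_le_right.trans inf_le_right)))

lemma essIn_sup_of_disjoint {V X Y : Submodule A M} (hA : EssIn V X) (hXY : X ⊓ Y = ⊥) :
    EssIn (V ⊔ Y) (X ⊔ Y) := by
  refine ⟨sup_le_sup_right hA.1 _, fun K hK hKne => ?_⟩
  by_cases hK' : (K ⊔ Y) ⊓ X = ⊥
  · -- then K ≤ Y
    have hKY : K ≤ Y := by
      intro k hk
      obtain ⟨x, hx, y, hy, hxy⟩ := Submodule.mem_sup.mp (hK hk)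
      have hxK : x ∈ (K ⊔ Y) ⊓ X :=
        ⟨Submodule.mem_sup.mpr ⟨k, hk, -y, neg_mem hy, by rw [← hxy]; abel⟩, hx⟩
      rw [hK'] at hxK
      have : x = 0 := hxK
      rw [← hxy, this, zero_add]; exact hy
    have : (V ⊔ Y) ⊓ K = K := inf_eq_right.mpr (hKY.trans le_sup_right)
    rw [this]; exact hKne
  · have h2 := hA.2 ((K ⊔ Y) ⊓ X) inf_le_right hK'
    obtain ⟨a, ha, ha0⟩ := Submodule.ne_bot_iff _ |>.mp h2
    obtain ⟨haV, haKY, haX⟩ : a ∈ V ∧ a ∈ K ⊔ Y ∧ a ∈ X := ⟨ha.1, ha.2.1, ha.2.2⟩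
    obtain ⟨k, hk, y, hy, hky⟩ := Submodule.mem_sup.mp haKY
    have hk0 : k ≠ 0 := by
      rintro rfl
      rw [zero_add] at hky
      apply ha0
      have : a ∈ X ⊓ Y := ⟨haX, hky ▸ hy⟩
      rw [hXY] at this; exact this
    have hkmem : k ∈ (V ⊔ Y) ⊓ K :=
      ⟨Submodule.mem_sup.mpr ⟨a, haV, -y, neg_mem hy, by rw [← hky]; abel⟩, hk⟩
    intro hcon
    rw [hcon] at hkmem
    exact hk0 hkmem

lemma fin_iSup_split {m : ℕ} (f : Fin (m + 1) → Submodule A M) :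
    (⨆ j, f j) = (⨆ j : Fin m, f j.castSucc) ⊔ f (Fin.last m) := by
  refine le_antisymm (iSup_le fun j => ?_) (sup_le (iSup_le fun j => le_iSup f _) (le_iSup f _))
  rcases Fin.eq_castSucc_or_eq_last j with ⟨i, rfl⟩ | rfl
  · exact le_sup_of_le_left (le_iSup (fun j : Fin m => f j.castSucc) i)
  · exact le_sup_right

lemma essIn_iSup : ∀ (m : ℕ) (X V : Fin m → Submodule A M), iSupIndep X →
    (∀ j, EssIn (V j) (X j)) → EssIn (⨆ j, V j) (⨆ j, X j) := by
  intro m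
  induction m with
  | zero =>
    intro X V _ _
    rw [iSup_of_empty, iSup_of_empty]
    exact ⟨le_rfl, fun K hK hKne => absurd (le_bot_iff.mp hK) hKne⟩
  | succ m ih =>
    intro X V hind hess
    have hdisj : (⨆ j : Fin m, X j.castSucc) ⊓ X (Fin.last m) = ⊥ := by
      have := (hind (Fin.last m)).eq_bot
      rw [inf_comm]
      refine le_bot_iff.mp ?_
      rw [← this]
      refine inf_le_inf_left _ (iSup_le fun j => ?_)
      exact le_iSup₂ (f := fun j _ => X j) j.castSucc (Fin.castSucc_lt_last j).ne
    have IH := ih (fun j => X j.castSucc) (fun j => V j.castSucc)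
      (hind.comp (Fin.castSucc_injective m)) (fun j => hess _)
    have E1 := essIn_sup_of_disjoint IH hdisj
    have hdisj2 : X (Fin.last m) ⊓ (⨆ j : Fin m, V j.castSucc) = ⊥ := by
      refine le_bot_iff.mp ?_
      rw [← hdisj, inf_comm (X (Fin.last m))]
      exact inf_le_inf_right _ (iSup_le fun j => (hess j.castSucc).1.trans
        (le_iSup (fun j : Fin m => X j.castSucc) j))
    have E2 := essIn_sup_of_disjoint (hess (Fin.last m)) hdisj2
    rw [fin_iSup_split X, fin_iSup_split V]
    rw [sup_comm (⨆ j : Fin m, V j.castSucc) (V (Fin.last m))]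
    refine E2.trans ?_
    rwa [sup_comm (X (Fin.last m)) (⨆ j : Fin m, V j.castSucc)]



variable {N : Type*} [AddCommGroup N] [Module A N]

lemma map_indep (φ : M →ₗ[A] N) {k : ℕ} (g : Fin k → Submodule A M)
    (hind : iSupIndep g) (hne : ∀ i, g i ≠ ⊥)
    (hker : (⨆ i, g i) ⊓ LinearMap.ker φ = ⊥) :
    iSupIndep (fun i => (g i).map φ) ∧ ∀ i, (g i).map φ ≠ ⊥ := by
  have hinj : ∀ x ∈ (⨆ i, g i), φ x = 0 → x = 0 := by
    intro x hx hx0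
    have : x ∈ (⨆ i, g i) ⊓ LinearMap.ker φ := ⟨hx, hx0⟩
    rwa [hker] at this
  constructor
  · intro i
    rw [disjoint_iff]
    refine le_bot_iff.mp fun x hx => ?_
    obtain ⟨hx1, hx2⟩ := hx
    have hmap : (⨆ (j) (_ : j ≠ i), (g j).map φ) = ((⨆ (j) (_ : j ≠ i), g j).map φ) := by
      rw [Submodule.map_iSup]
      exact iSup_congr fun j => by rw [Submodule.map_iSup]
    rw [hmap] at hx2
    obtain ⟨a, ha, rfl⟩ := hx1
    obtain ⟨b, hb, hba⟩ := hx2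
    have hbmem : b ∈ ⨆ j, g j := (iSup_le fun j => iSup_le fun _ => le_iSup g j) hb
    have hab : a - b = 0 := hinj _ (sub_mem (le_iSup g i ha) hbmem)
      (by rw [map_sub, hba, sub_self])
    have hba' : a = b := by rwa [sub_eq_zero] at hab
    have : a ∈ g i ⊓ ⨆ (j) (_ : j ≠ i), g j := ⟨ha, hba' ▸ hb⟩
    rw [(hind i).eq_bot] at this
    rw [show a = 0 from this, map_zero]
    exact Submodule.zero_mem ⊥
  · intro i
    obtain ⟨x, hx, hx0⟩ := (Submodule.ne_bot_iff _).mp (hne i)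
    refine (Submodule.ne_bot_iff _).mpr ⟨φ x, Submodule.mem_map_of_mem hx, fun h0 => hx0 ?_⟩
    exact hinj _ (le_iSup g i hx) h0

lemma unif_map (φ : M →ₗ[A] N) {U : Submodule A M} (hU : IsUnif U)
    (hker : U ⊓ LinearMap.ker φ = ⊥) : IsUnif (U.map φ) := by
  have hinj : ∀ x ∈ U, φ x = 0 → x = 0 := by
    intro x hx hx0
    have : x ∈ U ⊓ LinearMap.ker φ := ⟨hx, hx0⟩
    rwa [hker] at this
  intro K₁ K₂ hK₁ hK₂ hK₁0 hK₂0
  set B₁ := U ⊓ Submodule.comap φ K₁ with hB₁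
  set B₂ := U ⊓ Submodule.comap φ K₂ with hB₂
  have hmapB : ∀ (K : Submodule A N), K ≤ U.map φ → (U ⊓ Submodule.comap φ K).map φ = K := by
    intro K hK
    refine le_antisymm (Submodule.map_le_iff_le_comap.mpr inf_le_right) fun x hx => ?_
    obtain ⟨u, hu, rfl⟩ := hK hx
    exact Submodule.mem_map_of_mem ⟨hu, hx⟩
  have hB₁0 : B₁ ≠ ⊥ := fun h => hK₁0 (by rw [← hmapB K₁ hK₁, ← hB₁, h, Submodule.map_bot])
  have hB₂0 : B₂ ≠ ⊥ := fun h => hK₂0 (by rw [← hmapB K₂ hK₂, ← hB₂, h, Submodule.map_bot])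
  have hB := hU B₁ B₂ inf_le_left inf_le_left hB₁0 hB₂0
  obtain ⟨x, hx, hx0⟩ := (Submodule.ne_bot_iff _).mp hB
  refine (Submodule.ne_bot_iff _).mpr ⟨φ x, ⟨hx.1.2, hx.2.2⟩,
    fun h0 => hx0 (hinj _ hx.1.1 h0)⟩

lemma unif_top_quot {t : Submodule A A} (ht : t ≠ ⊤)
    (ht2 : ∀ N₁ N₂ : Submodule A A, N₁ ⊓ N₂ = t → N₁ = t ∨ N₂ = t) :
    IsUnif (⊤ : Submodule A (A ⧸ t)) := by
  intro K₁ K₂ _ _ hK₁0 hK₂0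
  intro hcon
  have hcomap : Submodule.comap t.mkQ K₁ ⊓ Submodule.comap t.mkQ K₂ = t := by
    rw [← Submodule.comap_inf, hcon]
    simp [Submodule.comap_bot, Submodule.ker_mkQ]
  have hbot : ∀ K : Submodule A (A ⧸ t), K ≠ ⊥ → Submodule.comap t.mkQ K ≠ t := by
    intro K hK0 hcm
    apply hK0
    refine le_bot_iff.mp fun x hx => ?_
    obtain ⟨a, rfl⟩ := t.mkQ_surjective x
    have : a ∈ Submodule.comap t.mkQ K := hx
    rw [hcm] at this
    rw [Submodule.mem_bot, Submodule.mkQ_apply]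
    exact (Submodule.Quotient.mk_eq_zero t).mpr this
  rcases ht2 _ _ hcomap with h | h
  · exact hbot K₁ hK₁0 h
  · exact hbot K₂ hK₂0 h

/-- Key counting lemma: in a module that is the direct sum of `m` uniform submodules,
any independent family of nonzero submodules has at most `m` members. -/
lemma dsu : ∀ (m : ℕ) (W : Type udsu) [AddCommGroup W] [Module A W]
    (U : Fin m → Submodule A W),
    (∀ j, U j ≠ ⊥) → (∀ j, IsUnif (U j)) → iSupIndep U → (⨆ j, U j) = ⊤ →
    ∀ (s : ℕ) (g : Fin s → Submodule A W), iSupIndep g → (∀ i, g i ≠ ⊥) → s ≤ m := by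
  intro m
  induction m with
  | zero =>
    intro W _ _ U hUne hUu hUind hUsup s g hgind hgne
    rcases Nat.eq_zero_or_pos s with rfl | hs
    · exact le_rfl
    exfalso
    have h0 : (⊤ : Submodule A W) = ⊥ := by rw [← hUsup, iSup_of_empty]
    exact hgne ⟨0, hs⟩ (le_bot_iff.mp (h0 ▸ le_top))
  | succ m ih =>
    intro W _ _ U hUne hUu hUind hUsup s g hgind hgne
    rcases s with _ | s'
    · exact Nat.zero_le _
    set N' : Submodule A W := ⨆ i : Fin s', g i.succ with hN'
    have hN'le : N' ≤ ⨆ (j) (_ : j ≠ (0 : Fin (s' + 1))), g j :=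
      iSup_le fun i => le_iSup₂ (f := fun j _ => g j) i.succ (Fin.succ_ne_zero i)
    have hg0N : g 0 ⊓ N' = ⊥ := ((hgind 0).mono_right hN'le).eq_bot
    by_cases hAc : ∀ j, U j ⊓ N' ≠ ⊥
    · exfalso
      have hEss : EssIn (⨆ j, (U j ⊓ N')) (⨆ j, U j) :=
        essIn_iSup _ U (fun j => U j ⊓ N') hUind (fun j =>
          ⟨inf_le_left, fun K hK hKne => hUu j (U j ⊓ N') K inf_le_left hK (hAc j) hKne⟩)
      rw [hUsup] at hEss
      refine hEss.2 (g 0) le_top (hgne 0) (le_bot_iff.mp ?_)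
      calc (⨆ j, (U j ⊓ N')) ⊓ g 0 ≤ N' ⊓ g 0 :=
            inf_le_inf_right _ (iSup_le fun j => inf_le_right)
        _ = ⊥ := by rw [inf_comm]; exact hg0N
    · push_neg at hAc
      obtain ⟨j₀, hj₀⟩ := hAc
      set φ := (U j₀).mkQ with hφ
      have hker : LinearMap.ker φ = U j₀ := Submodule.ker_mkQ _
      have haux : (⨆ l : Fin m, U (j₀.succAbove l)) ⊓ U j₀ = ⊥ := by
        rw [inf_comm]
        refine le_bot_iff.mp ?_
        rw [← (hUind j₀).eq_bot]
        exact inf_le_inf_left _ (iSup_le fun l =>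
          le_iSup₂ (f := fun j _ => U j) (j₀.succAbove l) (Fin.succAbove_ne j₀ l))
      have hUq := map_indep φ (fun l => U (j₀.succAbove l))
        (hUind.comp Fin.succAbove_right_injective) (fun l => hUne _)
        (by rw [hker]; exact haux)
      have hUqu : ∀ l, IsUnif ((U (j₀.succAbove l)).map φ) := fun l =>
        unif_map φ (hUu _)
          (by rw [hker]
              exact (hUind.pairwiseDisjoint (Fin.succAbove_ne j₀ l)).eq_bot)
      have hmapj₀ : (U j₀).map φ = ⊥ := by
        refine le_bot_iff.mp fun x hx => ?_
        obtain ⟨a, ha, rfl⟩ := hx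
        have : a ∈ LinearMap.ker φ := by rw [hker]; exact ha
        simpa using this
      have hsupq : (⨆ l : Fin m, (U (j₀.succAbove l)).map φ) = ⊤ := by
        have h1 : (⨆ l : Fin m, U (j₀.succAbove l)) ⊔ U j₀ = ⊤ := by
          rw [← hUsup]
          refine le_antisymm (sup_le (iSup_le fun l => le_iSup U _) (le_iSup U _))
            (iSup_le fun j => ?_)
          rcases eq_or_ne j j₀ with rfl | hne
          · exact le_sup_right
          · obtain ⟨l, rfl⟩ := Fin.exists_succAbove_eq hne
            exact le_sup_of_le_left (le_iSup (fun l => U (j₀.succAbove l)) l)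
        calc (⨆ l : Fin m, (U (j₀.succAbove l)).map φ)
            = ((⨆ l : Fin m, U (j₀.succAbove l)).map φ) := by rw [Submodule.map_iSup]
          _ = (((⨆ l : Fin m, U (j₀.succAbove l)) ⊔ U j₀).map φ) := by
              rw [Submodule.map_sup, hmapj₀, sup_bot_eq]
          _ = ⊤ := by rw [h1, Submodule.map_top, Submodule.range_mkQ]
      have hgq := map_indep φ (fun i => g i.succ) (hgind.comp (Fin.succ_injective s'))
        (fun i => hgne _) (by rw [hker, ← hN', inf_comm]; exact hj₀)
      exact Nat.succ_le_succ (ih (W ⧸ U j₀) (fun l => (U (j₀.succAbove l)).map φ)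
        hUq.2 hUqu hUq.1 hsupq s' (fun i => (g i.succ).map φ) hgq.1 hgq.2)


lemma indep_le_card {T : Finset (Submodule A A)}
    (hT : ∀ q ∈ T, q ≠ ⊤ ∧ ∀ N₁ N₂ : Submodule A A, N₁ ⊓ N₂ = q → N₁ = q ∨ N₂ = q)
    (hinf : T.inf id = ⊥)
    {s : ℕ} (g : Fin s → Submodule A A) (hind : iSupIndep g) (hne : ∀ i, g i ≠ ⊥) :
    s ≤ T.card := by
  classical
  let ι := {t : Submodule A A // t ∈ T}
  let Wf : ι → Type _ := fun t => A ⧸ (t : Submodule A A)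
  let W := ∀ t : ι, Wf t
  let φ : A →ₗ[A] W := LinearMap.pi (fun t => (t : Submodule A A).mkQ)
  have hkerφ : LinearMap.ker φ = ⊥ := by
    rw [LinearMap.ker_pi]
    have h1 : (⨅ t : ι, LinearMap.ker ((t : Submodule A A).mkQ))
        = ⨅ t : ι, (t : Submodule A A) := iInf_congr (fun t => Submodule.ker_mkQ _)
    have h2 : (⨅ t : ι, (t : Submodule A A)) = T.inf id := by
      rw [Finset.inf_eq_iInf, iInf_subtype]
      simp only [id_eq]
    rw [h1, h2, hinf]
  let U : ι → Submodule A W := fun t => LinearMap.range (LinearMap.single A Wf t)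
  have hU1 : ∀ t, U t ≠ ⊥ := by
    intro t
    have : Nontrivial (Wf t) :=
      Submodule.Quotient.nontrivial_iff.mpr (hT t t.2).1
    obtain ⟨x, hx⟩ := exists_ne (0 : Wf t)
    refine (Submodule.ne_bot_iff _).mpr ⟨LinearMap.single A Wf t x, ⟨x, rfl⟩, fun h0 => hx ?_⟩
    have := congrArg (fun y : W => y t) h0
    exact (by simpa using this : x = (0 : W) t)
  have hU2 : ∀ t, IsUnif (U t) := by
    intro t
    have hker : (⊤ : Submodule A (Wf t)) ⊓ LinearMap.ker (LinearMap.single A Wf t) = ⊥ := by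
      rw [top_inf_eq, LinearMap.ker_eq_bot]
      intro a b hab
      have := congrArg (fun y : W => y t) hab
      simpa using this
    have := unif_map (LinearMap.single A Wf t)
      (unif_top_quot (hT t t.2).1 (hT t t.2).2) hker
    rwa [Submodule.map_top] at this
  have hU3 : iSupIndep U := by
    intro t
    rw [disjoint_iff]
    refine le_bot_iff.mp fun x hx => ?_
    obtain ⟨hx1, hx2⟩ := hx
    obtain ⟨a, rfl⟩ := hx1
    have hle : (⨆ (t') (_ : t' ≠ t), U t')
        ≤ LinearMap.ker (LinearMap.proj (R := A) (φ := Wf) t) := by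
      refine iSup₂_le fun t' ht' => ?_
      rintro y ⟨b, rfl⟩
      simp only [LinearMap.mem_ker, LinearMap.single_apply, LinearMap.proj_apply]
      exact Pi.single_eq_of_ne (Ne.symm ht') b
    have h0 : a = 0 := by
      have := hle hx2
      rw [LinearMap.mem_ker, LinearMap.proj_apply, LinearMap.single_apply,
        Pi.single_eq_same] at this
      exact this
    simp [h0]
  have hU4 : (⨆ t, U t) = ⊤ := by
    rw [eq_top_iff]
    intro x _
    rw [show x = ∑ t : ι, LinearMap.single A Wf t (x t) by
      simp only [LinearMap.single_apply]
      rw [Finset.univ_sum_single]]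
    exact sum_mem fun t _ => le_iSup U t ⟨x t, rfl⟩
  have hmap := map_indep φ g hind hne (by rw [hkerφ, inf_bot_eq])
  let e : Fin T.card ≃ ι := (Fintype.equivFinOfCardEq (Fintype.card_coe T)).symm
  exact dsu T.card W (fun l => U (e l)) (fun l => hU1 _) (fun l => hU2 _)
    (hU3.comp e.injective) (by rw [e.surjective.iSup_comp]; exact hU4)
    s (fun i => (g i).map φ) hmap.1 hmap.2


section Noetherian

variable {R : Type*} [CommRing R]

lemma exists_unif_le [IsNoetherianRing R] {N : Submodule R R} (hN : N ≠ ⊥) :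
    ∃ U : Submodule R R, U ≤ N ∧ U ≠ ⊥ ∧ IsUnif U := by
  by_contra hcon
  push_neg at hcon
  have key : ∀ B : Submodule R R, B ≤ N → B ≠ ⊥ →
      ∃ P : Submodule R R × Submodule R R,
        P.1 ≤ B ∧ P.2 ≤ B ∧ P.1 ≠ ⊥ ∧ P.2 ≠ ⊥ ∧ P.1 ⊓ P.2 = ⊥ := by
    intro B hBN hB0
    have hnu := hcon B hBN hB0
    rw [IsUnif] at hnu
    push_neg at hnu
    obtain ⟨K₁, K₂, h1, h2, h3, h4, h5⟩ := hnu
    exact ⟨(K₁, K₂), h1, h2, h3, h4, h5⟩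
  let step : {B : Submodule R R // B ≤ N ∧ B ≠ ⊥} → {B : Submodule R R // B ≤ N ∧ B ≠ ⊥} :=
    fun B => ⟨(Classical.choose (key B.1 B.2.1 B.2.2)).2,
      ((Classical.choose_spec (key B.1 B.2.1 B.2.2)).2.1).trans B.2.1,
      (Classical.choose_spec (key B.1 B.2.1 B.2.2)).2.2.2.1⟩
  let Bse : ℕ → {B : Submodule R R // B ≤ N ∧ B ≠ ⊥} := fun n => step^[n] ⟨N, le_rfl, hN⟩
  have hBsucc : ∀ n, Bse (n + 1) = step (Bse n) := fun n =>
    Function.iterate_succ_apply' step n _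
  let Aseq : ℕ → Submodule R R := fun n => (Classical.choose (key (Bse n).1 (Bse n).2.1 (Bse n).2.2)).1
  have hspec : ∀ n, Aseq n ≤ (Bse n).1 ∧ Aseq n ≠ ⊥ ∧ Aseq n ⊓ (Bse (n + 1)).1 = ⊥ ∧
      (Bse (n+1)).1 ≤ (Bse n).1 := by
    intro n
    have hs := Classical.choose_spec (key (Bse n).1 (Bse n).2.1 (Bse n).2.2)
    have hB : (Bse (n+1)).1 = (Classical.choose (key (Bse n).1 (Bse n).2.1 (Bse n).2.2)).2 := by
      rw [hBsucc n]
    exact ⟨hs.1, hs.2.2.1, by rw [hB]; exact hs.2.2.2.2, by rw [hB]; exact hs.2.1⟩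
  let SS : ℕ → Submodule R R := fun k => ⨆ i : Fin k, Aseq i
  have hSSsucc : ∀ k, SS (k + 1) = SS k ⊔ Aseq k := by
    intro k
    have := fin_iSup_split (A := R) (M := R) (fun i : Fin (k+1) => Aseq i)
    simpa using this
  have hSSB : ∀ k, SS k ⊓ (Bse k).1 = ⊥ := by
    intro k
    induction k with
    | zero => simp only [SS, iSup_of_empty, bot_inf_eq]
    | succ k ihk =>
      rw [hSSsucc k]
      refine le_bot_iff.mp fun x hx => ?_
      obtain ⟨hx1, hx2⟩ := hx
      obtain ⟨a, ha, b, hb, hab⟩ := Submodule.mem_sup.mp hx1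
      have hxB : x ∈ (Bse k).1 := (hspec k).2.2.2 hx2
      have hbB : b ∈ (Bse k).1 := (hspec k).1 hb
      have haSB : a ∈ SS k ⊓ (Bse k).1 := ⟨ha, by
        have : a = x - b := by rw [← hab]; abel
        rw [this]; exact sub_mem hxB hbB⟩
      rw [ihk] at haSB
      have ha0 : a = 0 := haSB
      have hxb : x = b := by rw [← hab, ha0, zero_add]
      have : x ∈ Aseq k ⊓ (Bse (k+1)).1 := ⟨hxb ▸ hb, hx2⟩
      rwa [(hspec k).2.2.1] at this
  have hstrict : StrictMono SS := by
    refine strictMono_nat_of_lt_succ fun k => ?_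
    rw [hSSsucc k]
    refine lt_of_le_of_ne le_sup_left fun heq => ?_
    obtain ⟨a, ha, ha0⟩ := (Submodule.ne_bot_iff _).mp (hspec k).2.1
    have haS : a ∈ SS k := by rw [heq]; exact Submodule.mem_sup_right ha
    have : a ∈ SS k ⊓ (Bse k).1 := ⟨haS, (hspec k).1 ha⟩
    rw [hSSB k] at this
    exact ha0 this
  obtain ⟨n, hn⟩ := monotone_stabilizes_iff_noetherian.mpr
    (isNoetherianRing_iff.mp inferInstance) ⟨SS, hstrict.monotone⟩
  exact (hstrict (Nat.lt_succ_self n)).ne (hn (n + 1) (Nat.le_succ n))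

lemma exists_decomp_card_le [IsNoetherianRing R] [Nontrivial R] {n : ℕ}
    (HB : ∀ (s : ℕ) (g : Fin s → Submodule R R), iSupIndep g → (∀ i, g i ≠ ⊥) → s ≤ n) :
    ∃ T : Finset (Submodule R R), T.card ≤ n ∧
      (∀ q ∈ T, q ≠ ⊤ ∧ ∀ N₁ N₂ : Submodule R R, N₁ ⊓ N₂ = q → N₁ = q ∨ N₂ = q) ∧
      T.inf id = ⊥ := by
  classical
  set Sind := {s : ℕ | ∃ g : Fin s → Submodule R R, iSupIndep g ∧ ∀ i, g i ≠ ⊥} with hSind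
  have h0 : 0 ∈ Sind := ⟨fun i => i.elim0, fun i => i.elim0, fun i => i.elim0⟩
  have hbdd : BddAbove Sind := ⟨n, fun s hs => by
    obtain ⟨g, h1, h2⟩ := hs; exact HB s g h1 h2⟩
  set u := sSup Sind with hu_def
  have hu : u ∈ Sind := Nat.sSup_mem ⟨0, h0⟩ hbdd
  have hun : u ≤ n := csSup_le ⟨0, h0⟩ (fun s hs => by
    obtain ⟨g, h1, h2⟩ := hs; exact HB s g h1 h2)
  obtain ⟨g, hgind, hgne⟩ := hu
  have huni : ∀ i, ∃ U, U ≤ g i ∧ U ≠ ⊥ ∧ IsUnif U := fun i => exists_unif_le (hgne i)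
  choose U hUle hUne hUuni using huni
  have hUind : iSupIndep U := hgind.mono hUle
  -- essentiality of ⨆ U from maximality of u
  have hess : ∀ z : R, z ≠ 0 → Submodule.span R {z} ⊓ (⨆ i, U i) ≠ ⊥ := by
    intro z hz hcon
    set h : Fin (u + 1) → Submodule R R := Fin.snoc U (Submodule.span R {z}) with hh
    have hlast : h (Fin.last u) = Submodule.span R {z} := Fin.snoc_last _ _
    have hcast : ∀ i : Fin u, h i.castSucc = U i := fun i => Fin.snoc_castSucc _ _ _
    have hspan0 : Submodule.span R {z} ≠ ⊥ := by
      simpa [Submodule.span_singleton_eq_bot] using hz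
    have hne' : ∀ i, h i ≠ ⊥ := by
      intro i
      rcases Fin.eq_castSucc_or_eq_last i with ⟨j, rfl⟩ | rfl
      · rw [hcast]; exact hUne j
      · rw [hlast]; exact hspan0
    have hind' : iSupIndep h := by
      intro i
      rcases Fin.eq_castSucc_or_eq_last i with ⟨j, rfl⟩ | rfl
      · rw [hcast, disjoint_iff]
        refine le_bot_iff.mp fun x hx => ?_
        obtain ⟨hx1, hx2⟩ := hx
        have hle : (⨆ (k) (_ : k ≠ j.castSucc), h k)
            ≤ (⨆ (k) (_ : k ≠ j), U k) ⊔ Submodule.span R {z} := by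
          refine iSup₂_le fun k hk => ?_
          rcases Fin.eq_castSucc_or_eq_last k with ⟨l, rfl⟩ | rfl
          · have hlj : l ≠ j := fun hlj => hk (by rw [hlj])
            rw [hcast]
            exact le_sup_of_le_left (le_iSup₂ (f := fun k _ => U k) l hlj)
          · rw [hlast]; exact le_sup_right
        obtain ⟨y, hy, c, hc, hyc⟩ := Submodule.mem_sup.mp (hle hx2)
        have hcmem : c ∈ Submodule.span R {z} ⊓ (⨆ i, U i) := by
          refine ⟨hc, ?_⟩
          have hxmem : x ∈ ⨆ i, U i := le_iSup U j hx1
          have hymem : y ∈ ⨆ i, U i :=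
            (iSup₂_le fun k _ => le_iSup U k : (⨆ (k) (_ : k ≠ j), U k) ≤ ⨆ i, U i) hy
          have : c = x - y := by rw [← hyc]; abel
          rw [this]; exact sub_mem hxmem hymem
        rw [inf_comm] at hcon
        rw [inf_comm, hcon] at hcmem
        have hc0 : c = 0 := hcmem
        have hxy : x = y := by rw [← hyc, hc0, add_zero]
        have : x ∈ U j ⊓ ⨆ (k) (_ : k ≠ j), U k := ⟨hx1, hxy ▸ hy⟩
        rwa [(hUind j).eq_bot] at this
      · rw [hlast, disjoint_iff]
        refine le_bot_iff.mp ?_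
        rw [← hcon]
        refine inf_le_inf_left _ (iSup₂_le fun k hk => ?_)
        rcases Fin.eq_castSucc_or_eq_last k with ⟨l, rfl⟩ | rfl
        · rw [hcast]; exact le_iSup U l
        · exact absurd rfl hk
    have : u + 1 ∈ Sind := ⟨h, hind', hne'⟩
    have := le_csSup hbdd this
    omega
  -- Zorn: maximal complements
  have hzorn : ∀ i : Fin u, ∃ q : Submodule R R, (⨆ (j) (_ : j ≠ i), U j) ≤ q ∧ q ⊓ U i = ⊥ ∧
      ∀ z, (⨆ (j) (_ : j ≠ i), U j) ≤ z → z ⊓ U i = ⊥ → q ≤ z → z = q := by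
    intro i
    set s : Set (Submodule R R) := {q | (⨆ (j) (_ : j ≠ i), U j) ≤ q ∧ q ⊓ U i = ⊥} with hs
    have hs0 : (⨆ (j) (_ : j ≠ i), U j) ∈ s := ⟨le_rfl, (hUind i).symm.eq_bot⟩
    obtain ⟨m, hm1, hm2⟩ := zorn_le_nonempty₀ s (fun c hcs hchain y hy => by
      refine ⟨sSup c, ⟨le_trans (hcs hy).1 (le_sSup hy), ?_⟩, fun z hz => le_sSup hz⟩
      refine le_bot_iff.mp fun x hx => ?_
      obtain ⟨hx1, hx2⟩ := hx
      obtain ⟨w, hwc, hxw⟩ := (Submodule.mem_sSup_of_directed ⟨y, hy⟩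
        hchain.directedOn).mp hx1
      have : x ∈ w ⊓ U i := ⟨hxw, hx2⟩
      rwa [(hcs hwc).2] at this) _ hs0
    exact ⟨m, hm2.prop.1, hm2.prop.2, fun z hz1 hz2 hmz =>
      le_antisymm (hm2.le_of_ge ⟨hz1, hz2⟩ hmz) hmz⟩
  choose q hq1 hq2 hq3 using hzorn
  refine ⟨Finset.image q Finset.univ, ?_, ?_, ?_⟩
  · refine le_trans Finset.card_image_le ?_
    simpa using hun
  · rintro Q hQ
    obtain ⟨i, -, rfl⟩ := Finset.mem_image.mp hQ
    constructor
    · intro htop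
      have := hq2 i
      rw [htop, top_inf_eq] at this
      exact hUne i this
    · intro N₁ N₂ hN
      by_contra hcon2
      push_neg at hcon2
      obtain ⟨h1, h2⟩ := hcon2
      have hle1 : q i ≤ N₁ := hN ▸ inf_le_left
      have hle2 : q i ≤ N₂ := hN ▸ inf_le_right
      have hb1 : N₁ ⊓ U i ≠ ⊥ := fun hb => h1 (hq3 i N₁ ((hq1 i).trans hle1) hb hle1)
      have hb2 : N₂ ⊓ U i ≠ ⊥ := fun hb => h2 (hq3 i N₂ ((hq1 i).trans hle2) hb hle2)
      refine hUuni i (N₁ ⊓ U i) (N₂ ⊓ U i) inf_le_right inf_le_right hb1 hb2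
        (le_bot_iff.mp ?_)
      calc (N₁ ⊓ U i) ⊓ (N₂ ⊓ U i) ≤ (N₁ ⊓ N₂) ⊓ U i :=
            le_inf (le_inf (inf_le_left.trans inf_le_left)
              (inf_le_right.trans inf_le_left)) (inf_le_left.trans inf_le_right)
        _ = q i ⊓ U i := by rw [hN]
        _ = ⊥ := hq2 i
  · refine le_bot_iff.mp fun z hz => ?_
    rw [Submodule.mem_bot]
    by_contra hz0
    have hzq : ∀ i, z ∈ q i := by
      intro i
      have hmem : q i ∈ Finset.image q Finset.univ :=
        Finset.mem_image_of_mem q (Finset.mem_univ i)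
      exact Submodule.mem_finsetInf.mp hz _ hmem
    obtain ⟨z', hz'mem, hz'0⟩ := (Submodule.ne_bot_iff _).mp (hess z hz0)
    obtain ⟨hz'span, hz'sup⟩ := hz'mem
    have hz'q : ∀ i, z' ∈ q i := by
      intro i
      obtain ⟨r, rfl⟩ := Submodule.mem_span_singleton.mp hz'span
      exact Submodule.smul_mem _ r (hzq i)
    have hz'sup2 : z' ∈ ⨆ i ∈ (Finset.univ : Finset (Fin u)), U i := by
      have : (⨆ i ∈ (Finset.univ : Finset (Fin u)), U i) = ⨆ i, U i :=
        iSup_congr fun i => by rw [iSup_pos (Finset.mem_univ i)]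
      rw [this]; exact hz'sup
    obtain ⟨μ, hμ⟩ := (Submodule.mem_iSup_finset_iff_exists_sum U z').mp hz'sup2
    have hμne : ∃ i, (μ i : R) ≠ 0 := by
      by_contra hall
      push_neg at hall
      apply hz'0
      rw [← hμ]
      exact Finset.sum_eq_zero fun i _ => hall i
    obtain ⟨i₀, hi₀⟩ := hμne
    have hrest : (∑ j ∈ Finset.univ.erase i₀, (μ j : R)) ∈ q i₀ := by
      refine sum_mem fun j hj => ?_
      have hji : j ≠ i₀ := (Finset.mem_erase.mp hj).1
      exact (hq1 i₀) ((le_iSup₂ (f := fun k _ => U k) j hji) (μ j).2)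
    have hμmem : (μ i₀ : R) ∈ q i₀ ⊓ U i₀ := by
      constructor
      · have : (μ i₀ : R) = z' - ∑ j ∈ Finset.univ.erase i₀, (μ j : R) := by
          rw [← hμ, ← Finset.sum_erase_add Finset.univ _ (Finset.mem_univ i₀)]
          abel
        rw [this]
        exact sub_mem (hz'q i₀) hrest
      · exact (μ i₀).2
    rw [hq2 i₀] at hμmem
    exact hi₀ hμmem

end Noetherian


section Core

variable {S : Type*} [CommRing S] [IsNoetherianRing S]

lemma core_primary [Nontrivial S]
    (hirr : ∀ N₁ N₂ : Submodule S S, N₁ ⊓ N₂ = ⊥ → N₁ = ⊥ ∨ N₂ = ⊥) :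
    (⊥ : Ideal S).IsPrimary := by
  have hInf : InfIrred (⊥ : Ideal S) := by
    constructor
    · intro hmax
      have htop : (⊥ : Ideal S) = ⊤ := isMax_iff_eq_top.mp hmax
      have h1 : (1 : S) ∈ (⊥ : Ideal S) := htop ▸ Submodule.mem_top
      exact (one_ne_zero (α := S)) (by simpa using h1)
    · exact fun {b c} h => hirr b c h
  exact hInf.isPrimary

lemma core_main [Nontrivial S]
    (hirr : ∀ N₁ N₂ : Submodule S S, N₁ ⊓ N₂ = ⊥ → N₁ = ⊥ ∨ N₂ = ⊥) :
    ∃ p : Ideal S, p.IsPrime ∧ (∃ k : ℕ, p ^ k = ⊥) ∧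
      (∀ x y : S, x * y = 0 → x = 0 ∨ y ∈ p) ∧
      (∀ w₀ : S, (∀ r ∈ p, r * w₀ = 0) → w₀ ≠ 0 →
        ∃ d : S, d ∉ p ∧ ∀ w : S, (∀ r ∈ p, r * w = 0) → d * w ∈ Ideal.span {w₀}) := by
  classical
  have hprimary : (⊥ : Ideal S).IsPrimary := core_primary hirr
  have hrad : (⊥ : Ideal S).radical = nilradical S := rfl
  set p := nilradical S with hpdef
  have hp : p.IsPrime := hrad ▸ Ideal.isPrime_radical hprimary
  have hknil : ∃ k : ℕ, p ^ k = ⊥ := by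
    obtain ⟨k, hk⟩ := IsNoetherianRing.isNilpotent_nilradical S
    exact ⟨k, hk⟩
  have hzd : ∀ x y : S, x * y = 0 → x = 0 ∨ y ∈ p := by
    intro x y hxy
    have hb : x * y ∈ (⊥ : Ideal S) := by simpa using hxy
    rcases (Ideal.isPrimary_iff.mp hprimary).2 hb with h | h
    · left; simpa using h
    · right; rwa [hrad] at h
  refine ⟨p, hp, hknil, hzd, ?_⟩
  intro w₀ hw₀W hw₀
  have hone : (1 : S) ∉ p := fun h => hp.ne_top (Ideal.eq_top_of_isUnit_mem _ h isUnit_one)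
  have hunif : ∀ a b : S, a ≠ 0 → b ≠ 0 → ∃ r t : S, r * a = t * b ∧ r * a ≠ 0 := by
    intro a b ha hb
    have hne : Submodule.span S {a} ⊓ Submodule.span S {b} ≠ ⊥ := by
      intro hcon
      rcases hirr _ _ hcon with h | h
      · exact ha (by rwa [Submodule.span_singleton_eq_bot] at h)
      · exact hb (by rwa [Submodule.span_singleton_eq_bot] at h)
    obtain ⟨z, ⟨hza, hzb⟩, hz0⟩ := (Submodule.ne_bot_iff _).mp hne
    obtain ⟨r, hr⟩ := Submodule.mem_span_singleton.mp hza
    obtain ⟨t, ht⟩ := Submodule.mem_span_singleton.mp hzb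
    rw [smul_eq_mul] at hr ht
    exact ⟨r, t, by rw [hr, ht], by rw [hr]; exact hz0⟩
  let W : Submodule S S :=
    { carrier := {w | ∀ r ∈ p, r * w = 0}
      add_mem' := fun ha hb r hr => by
        rw [mul_add, ha r hr, hb r hr, add_zero]
      zero_mem' := fun r _ => mul_zero r
      smul_mem' := fun c w hw r hr => by
        rw [smul_eq_mul, ← mul_assoc, mul_comm r c, mul_assoc, hw r hr, mul_zero] }
  have hWmem : ∀ w : S, w ∈ W ↔ ∀ r ∈ p, r * w = 0 := fun w => Iff.rfl
  obtain ⟨sgen, hsgen⟩ := IsNoetherian.noetherian W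
  have hsgenW : ∀ w ∈ sgen, (w : S) ∈ W := fun w hw => by
    rw [← hsgen]; exact Submodule.subset_span hw
  have hpick : ∀ w : S, ∃ rw : S, rw ∉ p ∧ (w ∈ W → rw * w ∈ Ideal.span {w₀}) := by
    intro w
    by_cases hwW : w ∈ W
    · by_cases hw0 : w = 0
      · exact ⟨1, hone, fun _ => by
          rw [hw0, mul_zero]; exact Submodule.zero_mem _⟩
      · obtain ⟨r, t, hrt, hr0⟩ := hunif w w₀ hw0 hw₀
        refine ⟨r, fun hrp => hr0 ((hWmem w).mp hwW r hrp), fun _ => ?_⟩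
        rw [hrt]
        exact Ideal.mul_mem_left _ t (Submodule.mem_span_singleton_self w₀)
    · exact ⟨1, hone, fun h => absurd h hwW⟩
  choose rfun hrp hrs using hpick
  refine ⟨∏ w ∈ sgen, rfun w, ?_, ?_⟩
  · exact fun hd => (Submonoid.prod_mem p.primeCompl (fun w _ => hrp w) : _ ∈ p.primeCompl) hd
  · intro w hwprop
    have hwW : w ∈ W := (hWmem w).mpr hwprop
    have hle : W ≤ Submodule.comap (LinearMap.lsmul S S (∏ w ∈ sgen, rfun w))
        (Ideal.span {w₀}) := by
      rw [← hsgen, Submodule.span_le]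
      intro x hx
      have hx' : x ∈ W := hsgenW x hx
      refine Submodule.mem_comap.mpr ?_
      rw [LinearMap.lsmul_apply, smul_eq_mul]
      have heq : (∏ w ∈ sgen, rfun w) * x
          = (∏ w ∈ sgen.erase x, rfun w) * (rfun x * x) := by
        rw [← Finset.mul_prod_erase sgen rfun hx]; ring
      rw [heq]
      exact Ideal.mul_mem_left _ _ (hrs x hx')
    have := hle hwW
    simpa [LinearMap.lsmul_apply, smul_eq_mul] using this

lemma core_key_ps [Nontrivial S] {σ : Type*}
    (hirr : ∀ N₁ N₂ : Submodule S S, N₁ ⊓ N₂ = ⊥ → N₁ = ⊥ ∨ N₂ = ⊥)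
    (F G : MvPowerSeries σ S) (hF : F ≠ 0) (hG : G ≠ 0) :
    ∃ P Q : MvPowerSeries σ S, P * F = Q * G ∧ P * F ≠ 0 := by
  classical
  obtain ⟨p, hp, ⟨k, hk⟩, hzd, hdlem⟩ := core_main hirr
  have htf : ∀ w : S, (∀ r ∈ p, r * w = 0) → w ≠ 0 → ∀ t, t ∉ p → t * w ≠ 0 := by
    intro w hwW hw0 t ht hcon
    rcases hzd w t (by rw [mul_comm]; exact hcon) with h | h
    exacts [hw0 h, ht h]
  have reduce : ∀ H : MvPowerSeries σ S, H ≠ 0 → ∃ c : S, c • H ≠ 0 ∧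
      ∀ m, ∀ r ∈ p, r * (MvPowerSeries.coeff m (c • H)) = 0 := by
    intro H hH
    set IH : Ideal S := LinearMap.ker (LinearMap.toSpanSingleton S _ H) with hIH
    have hIHmem : ∀ c : S, c ∈ IH ↔ c • H = 0 := fun c => by
      rw [hIH, LinearMap.mem_ker, LinearMap.toSpanSingleton_apply]
    have hex : ∃ j, p ^ j ≤ IH := ⟨k, fun c hc => (hIHmem c).mpr (by
      rw [hk] at hc
      rw [show c = 0 from hc, zero_smul])⟩
    have hj₀spec := Nat.find_spec hex
    set j₀ := Nat.find hex with hj₀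
    have hj₀0 : j₀ ≠ 0 := by
      intro h
      have h1 : (1 : S) ∈ p ^ j₀ := by
        rw [h, pow_zero, Ideal.one_eq_top]; exact Submodule.mem_top
      have := hj₀spec h1
      rw [hIHmem, one_smul] at this
      exact hH this
    have hnotle : ¬ p ^ (j₀ - 1) ≤ IH := Nat.find_min hex (by omega)
    obtain ⟨c, hcp, hcIH⟩ := SetLike.not_le_iff_exists.mp hnotle
    refine ⟨c, fun h => hcIH ((hIHmem c).mpr h), ?_⟩
    intro m r hr
    have hrc : r * c ∈ p ^ j₀ := by
      have h1 : r * c ∈ p * p ^ (j₀ - 1) := Ideal.mul_mem_mul hr hcp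
      have h2 : p * p ^ (j₀ - 1) = p ^ j₀ := by
        rw [← pow_succ']
        congr 1
        omega
      rwa [h2] at h1
    have hz : (r * c) • H = 0 := (hIHmem _).mp (hj₀spec hrc)
    calc r * MvPowerSeries.coeff m (c • H)
        = MvPowerSeries.coeff m ((r * c) • H) := by
          rw [MvPowerSeries.coeff_smul, MvPowerSeries.coeff_smul, mul_assoc]
      _ = 0 := by rw [hz, map_zero]
  obtain ⟨cF, hcF0, hcFW⟩ := reduce F hF
  obtain ⟨cG, hcG0, hcGW⟩ := reduce G hG
  obtain ⟨m₀, hm₀⟩ : ∃ m, MvPowerSeries.coeff m (cF • F) ≠ 0 := by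
    by_contra hall
    push_neg at hall
    exact hcF0 (MvPowerSeries.ext fun m => by rw [hall m, map_zero])
  obtain ⟨m₁, hm₁⟩ : ∃ m, MvPowerSeries.coeff m (cG • G) ≠ 0 := by
    by_contra hall
    push_neg at hall
    exact hcG0 (MvPowerSeries.ext fun m => by rw [hall m, map_zero])
  set w₀ := MvPowerSeries.coeff m₀ (cF • F) with hw₀def
  have hw₀W : ∀ r ∈ p, r * w₀ = 0 := fun r hr => hcFW m₀ r hr
  obtain ⟨d, hdp, hd⟩ := hdlem w₀ hw₀W hm₀
  have hSFex : ∀ m, ∃ t : S, MvPowerSeries.coeff m (d • (cF • F)) = t * w₀ := by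
    intro m
    have : MvPowerSeries.coeff m (d • (cF • F)) ∈ Ideal.span {w₀} := by
      rw [MvPowerSeries.coeff_smul]
      exact hd _ (fun r hr => hcFW m r hr)
    obtain ⟨a, ha⟩ := Ideal.mem_span_singleton'.mp this
    exact ⟨a, ha.symm⟩
  have hSGex : ∀ m, ∃ t : S, MvPowerSeries.coeff m (d • (cG • G)) = t * w₀ := by
    intro m
    have : MvPowerSeries.coeff m (d • (cG • G)) ∈ Ideal.span {w₀} := by
      rw [MvPowerSeries.coeff_smul]
      exact hd _ (fun r hr => hcGW m r hr)
    obtain ⟨a, ha⟩ := Ideal.mem_span_singleton'.mp this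
    exact ⟨a, ha.symm⟩
  choose sF hsF using hSFex
  choose sG hsG using hSGex
  let SFs : MvPowerSeries σ S := sF
  let SGs : MvPowerSeries σ S := sG
  have hSFcoeff : ∀ m, MvPowerSeries.coeff m SFs = sF m := fun m => rfl
  have hSGcoeff : ∀ m, MvPowerSeries.coeff m SGs = sG m := fun m => rfl
  have hDF : d • (cF • F) = SFs * MvPowerSeries.C (σ := σ) w₀ :=
    MvPowerSeries.ext fun m => by
      rw [MvPowerSeries.coeff_mul_C, hSFcoeff, hsF]
  have hDG : d • (cG • G) = SGs * MvPowerSeries.C (σ := σ) w₀ :=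
    MvPowerSeries.ext fun m => by
      rw [MvPowerSeries.coeff_mul_C, hSGcoeff, hsG]
  haveI : p.IsPrime := hp
  have hsFnp : sF m₀ ∉ p := by
    intro hmem
    have h0 : sF m₀ * w₀ = 0 := hw₀W _ hmem
    rw [← hsF m₀] at h0
    rw [MvPowerSeries.coeff_smul] at h0
    exact htf w₀ hw₀W hm₀ d hdp h0
  have hsGnp : sG m₁ ∉ p := by
    intro hmem
    have h0 : sG m₁ * w₀ = 0 := hw₀W _ hmem
    rw [← hsG m₁] at h0
    rw [MvPowerSeries.coeff_smul] at h0
    refine htf _ (fun r hr => hcGW m₁ r hr) hm₁ d hdp h0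
  set π := Ideal.Quotient.mk p with hπ
  have hmapSF : MvPowerSeries.map (σ := σ) π SFs ≠ 0 := by
    intro h
    have := congrArg (MvPowerSeries.coeff m₀) h
    rw [MvPowerSeries.coeff_map, map_zero, hSFcoeff] at this
    exact hsFnp (Ideal.Quotient.eq_zero_iff_mem.mp this)
  have hmapSG : MvPowerSeries.map (σ := σ) π SGs ≠ 0 := by
    intro h
    have := congrArg (MvPowerSeries.coeff m₁) h
    rw [MvPowerSeries.coeff_map, map_zero, hSGcoeff] at this
    exact hsGnp (Ideal.Quotient.eq_zero_iff_mem.mp this)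
  have hprodne : MvPowerSeries.map (σ := σ) π (SFs * SGs) ≠ 0 := by
    rw [map_mul]
    exact mul_ne_zero hmapSF hmapSG
  obtain ⟨mstar, hmstar⟩ : ∃ m, MvPowerSeries.coeff m
      (MvPowerSeries.map (σ := σ) π (SFs * SGs)) ≠ 0 := by
    by_contra hall
    push_neg at hall
    exact hprodne (MvPowerSeries.ext fun m => by rw [hall m, map_zero])
  have hτ : MvPowerSeries.coeff mstar (SFs * SGs) ∉ p := by
    rw [MvPowerSeries.coeff_map] at hmstar
    exact fun h => hmstar (Ideal.Quotient.eq_zero_iff_mem.mpr h)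
  have hPF : SGs * (MvPowerSeries.C (σ := σ) d * MvPowerSeries.C (σ := σ) cF) * F
      = SGs * (SFs * MvPowerSeries.C (σ := σ) w₀) := by
    rw [← hDF, MvPowerSeries.smul_eq_C_mul, MvPowerSeries.smul_eq_C_mul]
    ring
  have hQG : SFs * (MvPowerSeries.C (σ := σ) d * MvPowerSeries.C (σ := σ) cG) * G
      = SFs * (SGs * MvPowerSeries.C (σ := σ) w₀) := by
    rw [← hDG, MvPowerSeries.smul_eq_C_mul, MvPowerSeries.smul_eq_C_mul]
    ring
  refine ⟨SGs * (MvPowerSeries.C (σ := σ) d * MvPowerSeries.C (σ := σ) cF),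
          SFs * (MvPowerSeries.C (σ := σ) d * MvPowerSeries.C (σ := σ) cG), ?_, ?_⟩
  · rw [hPF, hQG]
    ring
  · rw [hPF, ← mul_assoc, mul_comm SGs SFs]
    intro hcon
    have := congrArg (MvPowerSeries.coeff mstar) hcon
    rw [MvPowerSeries.coeff_mul_C, map_zero] at this
    exact htf w₀ hw₀W hm₀ _ hτ this

lemma core_key_poly [Nontrivial S] {σ : Type*}
    (hirr : ∀ N₁ N₂ : Submodule S S, N₁ ⊓ N₂ = ⊥ → N₁ = ⊥ ∨ N₂ = ⊥)
    (F G : MvPolynomial σ S) (hF : F ≠ 0) (hG : G ≠ 0) :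
    ∃ P Q : MvPolynomial σ S, P * F = Q * G ∧ P * F ≠ 0 := by
  classical
  obtain ⟨p, hp, ⟨k, hk⟩, hzd, hdlem⟩ := core_main hirr
  have htf : ∀ w : S, (∀ r ∈ p, r * w = 0) → w ≠ 0 → ∀ t, t ∉ p → t * w ≠ 0 := by
    intro w hwW hw0 t ht hcon
    rcases hzd w t (by rw [mul_comm]; exact hcon) with h | h
    exacts [hw0 h, ht h]
  have reduce : ∀ H : MvPolynomial σ S, H ≠ 0 → ∃ c : S, c • H ≠ 0 ∧
      ∀ m, ∀ r ∈ p, r * (MvPolynomial.coeff m (c • H)) = 0 := by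
    intro H hH
    set IH : Ideal S := LinearMap.ker (LinearMap.toSpanSingleton S _ H) with hIH
    have hIHmem : ∀ c : S, c ∈ IH ↔ c • H = 0 := fun c => by
      rw [hIH, LinearMap.mem_ker, LinearMap.toSpanSingleton_apply]
    have hex : ∃ j, p ^ j ≤ IH := ⟨k, fun c hc => (hIHmem c).mpr (by
      rw [hk] at hc
      rw [show c = 0 from hc, zero_smul])⟩
    have hj₀spec := Nat.find_spec hex
    set j₀ := Nat.find hex with hj₀
    have hj₀0 : j₀ ≠ 0 := by
      intro h
      have h1 : (1 : S) ∈ p ^ j₀ := by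
        rw [h, pow_zero, Ideal.one_eq_top]; exact Submodule.mem_top
      have := hj₀spec h1
      rw [hIHmem, one_smul] at this
      exact hH this
    have hnotle : ¬ p ^ (j₀ - 1) ≤ IH := Nat.find_min hex (by omega)
    obtain ⟨c, hcp, hcIH⟩ := SetLike.not_le_iff_exists.mp hnotle
    refine ⟨c, fun h => hcIH ((hIHmem c).mpr h), ?_⟩
    intro m r hr
    have hrc : r * c ∈ p ^ j₀ := by
      have h1 : r * c ∈ p * p ^ (j₀ - 1) := Ideal.mul_mem_mul hr hcp
      have h2 : p * p ^ (j₀ - 1) = p ^ j₀ := by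
        rw [← pow_succ']
        congr 1
        omega
      rwa [h2] at h1
    have hz : (r * c) • H = 0 := (hIHmem _).mp (hj₀spec hrc)
    calc r * MvPolynomial.coeff m (c • H)
        = MvPolynomial.coeff m ((r * c) • H) := by
          rw [MvPolynomial.coeff_smul, MvPolynomial.coeff_smul, smul_eq_mul, smul_eq_mul,
            mul_assoc]
      _ = 0 := by rw [hz, MvPolynomial.coeff_zero]
  obtain ⟨cF, hcF0, hcFW⟩ := reduce F hF
  obtain ⟨cG, hcG0, hcGW⟩ := reduce G hG
  obtain ⟨m₀, hm₀⟩ : ∃ m, MvPolynomial.coeff m (cF • F) ≠ 0 := MvPolynomial.ne_zero_iff.mp hcF0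
  obtain ⟨m₁, hm₁⟩ : ∃ m, MvPolynomial.coeff m (cG • G) ≠ 0 := MvPolynomial.ne_zero_iff.mp hcG0
  set w₀ := MvPolynomial.coeff m₀ (cF • F) with hw₀def
  have hw₀W : ∀ r ∈ p, r * w₀ = 0 := fun r hr => hcFW m₀ r hr
  obtain ⟨d, hdp, hd⟩ := hdlem w₀ hw₀W hm₀
  have hcoeffsmul : ∀ (c : S) (H : MvPolynomial σ S) m,
      MvPolynomial.coeff m (c • H) = c * MvPolynomial.coeff m H := by
    intro c H m
    rw [MvPolynomial.coeff_smul, smul_eq_mul]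
  have hSFex : ∀ m, ∃ t : S, MvPolynomial.coeff m (d • (cF • F)) = t * w₀ := by
    intro m
    have hsp : MvPolynomial.coeff m (d • (cF • F)) ∈ Ideal.span {w₀} := by
      rw [hcoeffsmul]
      exact hd _ (fun r hr => hcFW m r hr)
    obtain ⟨a, ha⟩ := Ideal.mem_span_singleton'.mp hsp
    exact ⟨a, ha.symm⟩
  have hSGex : ∀ m, ∃ t : S, MvPolynomial.coeff m (d • (cG • G)) = t * w₀ := by
    intro m
    have hsp : MvPolynomial.coeff m (d • (cG • G)) ∈ Ideal.span {w₀} := by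
      rw [hcoeffsmul]
      exact hd _ (fun r hr => hcGW m r hr)
    obtain ⟨a, ha⟩ := Ideal.mem_span_singleton'.mp hsp
    exact ⟨a, ha.symm⟩
  choose sF hsF using hSFex
  choose sG hsG using hSGex
  let SFs : MvPolynomial σ S :=
    ∑ m ∈ (d • (cF • F)).support, MvPolynomial.monomial m (sF m)
  let SGs : MvPolynomial σ S :=
    ∑ m ∈ (d • (cG • G)).support, MvPolynomial.monomial m (sG m)
  have hSFcoeff : ∀ m, MvPolynomial.coeff m SFs
      = if m ∈ (d • (cF • F)).support then sF m else 0 := by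
    intro m
    rw [MvPolynomial.coeff_sum]
    simp only [MvPolynomial.coeff_monomial]
    rw [Finset.sum_ite_eq' _ m sF]
  have hSGcoeff : ∀ m, MvPolynomial.coeff m SGs
      = if m ∈ (d • (cG • G)).support then sG m else 0 := by
    intro m
    rw [MvPolynomial.coeff_sum]
    simp only [MvPolynomial.coeff_monomial]
    rw [Finset.sum_ite_eq' _ m sG]
  have hDF : d • (cF • F) = MvPolynomial.C w₀ * SFs := by
    apply MvPolynomial.ext
    intro m
    rw [MvPolynomial.coeff_C_mul, hSFcoeff]
    by_cases hm : m ∈ (d • (cF • F)).support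
    · rw [if_pos hm, hsF m, mul_comm]
    · rw [if_neg hm, mul_zero]
      exact MvPolynomial.notMem_support_iff.mp hm
  have hDG : d • (cG • G) = MvPolynomial.C w₀ * SGs := by
    apply MvPolynomial.ext
    intro m
    rw [MvPolynomial.coeff_C_mul, hSGcoeff]
    by_cases hm : m ∈ (d • (cG • G)).support
    · rw [if_pos hm, hsG m, mul_comm]
    · rw [if_neg hm, mul_zero]
      exact MvPolynomial.notMem_support_iff.mp hm
  haveI : p.IsPrime := hp
  have hm₀supp : m₀ ∈ (d • (cF • F)).support := by
    rw [MvPolynomial.mem_support_iff, hcoeffsmul]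
    exact htf w₀ hw₀W hm₀ d hdp
  have hm₁supp : m₁ ∈ (d • (cG • G)).support := by
    rw [MvPolynomial.mem_support_iff, hcoeffsmul]
    exact htf _ (fun r hr => hcGW m₁ r hr) hm₁ d hdp
  have hsFnp : sF m₀ ∉ p := by
    intro hmem
    have h0 : sF m₀ * w₀ = 0 := hw₀W _ hmem
    rw [← hsF m₀, hcoeffsmul] at h0
    exact htf w₀ hw₀W hm₀ d hdp h0
  have hsGnp : sG m₁ ∉ p := by
    intro hmem
    have h0 : sG m₁ * w₀ = 0 := hw₀W _ hmem
    rw [← hsG m₁, hcoeffsmul] at h0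
    exact htf _ (fun r hr => hcGW m₁ r hr) hm₁ d hdp h0
  set π := Ideal.Quotient.mk p with hπ
  have hmapSF : MvPolynomial.map π SFs ≠ 0 := by
    intro h
    have hc := congrArg (MvPolynomial.coeff m₀) h
    rw [MvPolynomial.coeff_map, MvPolynomial.coeff_zero, hSFcoeff, if_pos hm₀supp] at hc
    exact hsFnp (Ideal.Quotient.eq_zero_iff_mem.mp hc)
  have hmapSG : MvPolynomial.map π SGs ≠ 0 := by
    intro h
    have hc := congrArg (MvPolynomial.coeff m₁) h
    rw [MvPolynomial.coeff_map, MvPolynomial.coeff_zero, hSGcoeff, if_pos hm₁supp] at hc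
    exact hsGnp (Ideal.Quotient.eq_zero_iff_mem.mp hc)
  have hprodne : MvPolynomial.map π (SFs * SGs) ≠ 0 := by
    rw [map_mul]
    exact mul_ne_zero hmapSF hmapSG
  obtain ⟨mstar, hmstar⟩ := MvPolynomial.ne_zero_iff.mp hprodne
  have hτ : MvPolynomial.coeff mstar (SFs * SGs) ∉ p := by
    rw [MvPolynomial.coeff_map] at hmstar
    exact fun h => hmstar (Ideal.Quotient.eq_zero_iff_mem.mpr h)
  have hPF : SGs * (MvPolynomial.C d * MvPolynomial.C cF) * F
      = SGs * (MvPolynomial.C w₀ * SFs) := by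
    rw [← hDF, MvPolynomial.smul_eq_C_mul, MvPolynomial.smul_eq_C_mul]
    ring
  have hQG : SFs * (MvPolynomial.C d * MvPolynomial.C cG) * G
      = SFs * (MvPolynomial.C w₀ * SGs) := by
    rw [← hDG, MvPolynomial.smul_eq_C_mul, MvPolynomial.smul_eq_C_mul]
    ring
  refine ⟨SGs * (MvPolynomial.C d * MvPolynomial.C cF),
          SFs * (MvPolynomial.C d * MvPolynomial.C cG), ?_, ?_⟩
  · rw [hPF, hQG]
    ring
  · rw [hPF]
    have hre : SGs * (MvPolynomial.C w₀ * SFs) = MvPolynomial.C w₀ * (SFs * SGs) := by ring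
    rw [hre]
    intro hcon
    have hc := congrArg (MvPolynomial.coeff mstar) hcon
    rw [MvPolynomial.coeff_C_mul, MvPolynomial.coeff_zero] at hc
    exact htf w₀ hw₀W hm₀ _ hτ (by rw [mul_comm] at hc; exact hc)

end Core

section Transfer

/-- `⊥` is irreducible when any two nonzero elements have a common nonzero multiple. -/
lemma irred_bot_of_key {B : Type*} [CommRing B] [Nontrivial B]
    (hkey : ∀ F G : B, F ≠ 0 → G ≠ 0 → ∃ P Q : B, P * F = Q * G ∧ P * F ≠ 0) :
    (⊥ : Submodule B B) ≠ ⊤ ∧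
      ∀ N₁ N₂ : Submodule B B, N₁ ⊓ N₂ = ⊥ → N₁ = ⊥ ∨ N₂ = ⊥ := by
  constructor
  · intro htop
    have h1 : (1 : B) ∈ (⊥ : Submodule B B) := htop ▸ Submodule.mem_top
    exact (one_ne_zero (α := B)) (by simpa using h1)
  · intro N₁ N₂ hN
    by_contra hcon
    push_neg at hcon
    obtain ⟨F, hFmem, hF0⟩ := (Submodule.ne_bot_iff _).mp hcon.1
    obtain ⟨G, hGmem, hG0⟩ := (Submodule.ne_bot_iff _).mp hcon.2
    obtain ⟨P, Q, hPQ, hne⟩ := hkey F G hF0 hG0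
    apply hne
    have h1 : P * F ∈ N₁ := by
      have := N₁.smul_mem P hFmem
      rwa [smul_eq_mul] at this
    have h2 : P * F ∈ N₂ := by
      have := N₂.smul_mem Q hGmem
      rwa [smul_eq_mul, ← hPQ] at this
    have hmem : P * F ∈ N₁ ⊓ N₂ := ⟨h1, h2⟩
    rw [hN] at hmem
    simpa using hmem

lemma irred_quot_bot {A' B : Type*} [CommRing A'] [CommRing B] (f : A' →+* B)
    (hf : Function.Surjective f) {q : Submodule A' A'} (hker : RingHom.ker f = q)
    (hq1 : q ≠ ⊤) (hq2 : ∀ N₁ N₂ : Submodule A' A', N₁ ⊓ N₂ = q → N₁ = q ∨ N₂ = q) :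
    (⊥ : Submodule B B) ≠ ⊤ ∧
      ∀ K₁ K₂ : Submodule B B, K₁ ⊓ K₂ = ⊥ → K₁ = ⊥ ∨ K₂ = ⊥ := by
  constructor
  · intro htop
    apply hq1
    have h10 : (1 : B) = 0 := by
      have h1 : (1 : B) ∈ (⊥ : Submodule B B) := htop ▸ Submodule.mem_top
      simpa using h1
    rw [← hker, eq_top_iff]
    intro a _
    have : f a = 0 := by
      calc f a = f a * 1 := by ring
        _ = 0 := by rw [h10, mul_zero]
    exact RingHom.mem_ker.mpr this
  · intro K₁ K₂ hK
    have hcomap : Ideal.comap f (K₁ : Ideal B) ⊓ Ideal.comap f (K₂ : Ideal B) = q := by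
      rw [← hker]
      ext a
      constructor
      · rintro ⟨h1, h2⟩
        have : f a ∈ K₁ ⊓ K₂ := ⟨h1, h2⟩
        rw [hK] at this
        exact RingHom.mem_ker.mpr (by simpa using this)
      · intro h
        have h0 : f a = 0 := RingHom.mem_ker.mp h
        constructor
        · show f a ∈ K₁
          rw [h0]; exact K₁.zero_mem
        · show f a ∈ K₂
          rw [h0]; exact K₂.zero_mem
    have hbot : ∀ K : Submodule B B, Ideal.comap f (K : Ideal B) = q → K = ⊥ := by
      intro K h
      refine le_antisymm (fun x hx => ?_) bot_le
      obtain ⟨a, rfl⟩ := hf x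
      have ha : a ∈ Ideal.comap f (K : Ideal B) := hx
      rw [h, ← hker] at ha
      simpa using RingHom.mem_ker.mp ha
    rcases hq2 _ _ hcomap with h | h
    · exact Or.inl (hbot _ h)
    · exact Or.inr (hbot _ h)

lemma irred_transfer_ker {A' B : Type*} [CommRing A'] [CommRing B] [Nontrivial B]
    (f : A' →+* B) (hf : Function.Surjective f)
    (h2 : ∀ N₁ N₂ : Submodule B B, N₁ ⊓ N₂ = ⊥ → N₁ = ⊥ ∨ N₂ = ⊥) :
    (RingHom.ker f : Submodule A' A') ≠ ⊤ ∧
      ∀ N₁ N₂ : Submodule A' A', N₁ ⊓ N₂ = RingHom.ker f → N₁ = RingHom.ker f ∨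
        N₂ = RingHom.ker f := by
  constructor
  · intro htop
    have h1 : (1 : A') ∈ RingHom.ker f := htop ▸ Submodule.mem_top
    rw [RingHom.mem_ker, map_one] at h1
    exact one_ne_zero h1
  · intro N₁ N₂ hN
    have hkerle : (RingHom.ker f : Submodule A' A') ≤ N₁ ⊓ N₂ := le_of_eq hN.symm
    have hmap : (Ideal.map f (N₁ : Ideal A')) ⊓ Ideal.map f (N₂ : Ideal A') = ⊥ := by
      refine le_antisymm (fun x hx => ?_) bot_le
      obtain ⟨hx1, hx2⟩ := hx
      have hx1' : x ∈ Ideal.map f (N₁ : Ideal A') := hx1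
      have hx2' : x ∈ Ideal.map f (N₂ : Ideal A') := hx2
      rw [Ideal.mem_map_iff_of_surjective f hf] at hx1' hx2'
      obtain ⟨a1, ha1, rfl⟩ := hx1'
      obtain ⟨a2, ha2, ha⟩ := hx2'
      have hker12 : a2 - a1 ∈ RingHom.ker f := by
        rw [RingHom.mem_ker, map_sub, ha, sub_self]
      have ha1N2 : a1 ∈ N₂ := by
        have hsub : a2 - (a2 - a1) ∈ N₂ := sub_mem ha2 ((hkerle hker12).2)
        simpa using hsub
      have hmem : a1 ∈ N₁ ⊓ N₂ := ⟨ha1, ha1N2⟩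
      rw [hN] at hmem
      rw [Submodule.mem_bot]
      exact RingHom.mem_ker.mp hmem
    have hbot : ∀ N : Submodule A' A', Ideal.map f (N : Ideal A') = ⊥ →
        (RingHom.ker f : Submodule A' A') ≤ N → N = RingHom.ker f := by
      intro N hmapN hle
      refine le_antisymm (fun a ha => ?_) hle
      have hfa : f a ∈ Ideal.map f (N : Ideal A') := Ideal.mem_map_of_mem f ha
      rw [hmapN] at hfa
      exact RingHom.mem_ker.mpr (by simpa using hfa)
    rcases h2 _ _ hmap with h | h
    · exact Or.inl (hbot _ h (hkerle.trans inf_le_left))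
    · exact Or.inr (hbot _ h (hkerle.trans inf_le_right))

end Transfer

section Extend

variable {R : Type*} [CommRing R] (σ : Type*)

/-- The ideal of power series all of whose coefficients lie in `I`. -/
def psE (I : Submodule R R) : Submodule (MvPowerSeries σ R) (MvPowerSeries σ R) where
  carrier := {F | ∀ m, MvPowerSeries.coeff m F ∈ I}
  add_mem' := fun hF hG m => by rw [map_add]; exact I.add_mem (hF m) (hG m)
  zero_mem' := fun m => by rw [map_zero]; exact I.zero_mem
  smul_mem' := by
    classical
    intro P F hF m
    rw [smul_eq_mul, MvPowerSeries.coeff_mul]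
    refine Submodule.sum_mem _ fun x _ => ?_
    rw [show MvPowerSeries.coeff x.1 P * MvPowerSeries.coeff x.2 F
        = MvPowerSeries.coeff x.1 P • MvPowerSeries.coeff x.2 F from rfl]
    exact I.smul_mem _ (hF x.2)

lemma mem_psE {I : Submodule R R} {F : MvPowerSeries σ R} :
    F ∈ psE σ I ↔ ∀ m, MvPowerSeries.coeff m F ∈ I := Iff.rfl

/-- The ideal of polynomials all of whose coefficients lie in `I`. -/
def mpE (I : Submodule R R) : Submodule (MvPolynomial σ R) (MvPolynomial σ R) where
  carrier := {F | ∀ m, MvPolynomial.coeff m F ∈ I}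
  add_mem' := fun hF hG m => by rw [MvPolynomial.coeff_add]; exact I.add_mem (hF m) (hG m)
  zero_mem' := fun m => by rw [MvPolynomial.coeff_zero]; exact I.zero_mem
  smul_mem' := by
    classical
    intro P F hF m
    rw [smul_eq_mul, MvPolynomial.coeff_mul]
    refine Submodule.sum_mem _ fun x _ => ?_
    rw [show MvPolynomial.coeff x.1 P * MvPolynomial.coeff x.2 F
        = MvPolynomial.coeff x.1 P • MvPolynomial.coeff x.2 F from rfl]
    exact I.smul_mem _ (hF x.2)

lemma mem_mpE {I : Submodule R R} {F : MvPolynomial σ R} :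
    F ∈ mpE σ I ↔ ∀ m, MvPolynomial.coeff m F ∈ I := Iff.rfl

lemma psE_bot : psE σ (⊥ : Submodule R R) = ⊥ := by
  refine le_antisymm (fun F hF => ?_) bot_le
  rw [Submodule.mem_bot]
  exact MvPowerSeries.ext fun m => by
    have := (mem_psE σ).mp hF m
    simpa using this

lemma mpE_bot : mpE σ (⊥ : Submodule R R) = ⊥ := by
  refine le_antisymm (fun F hF => ?_) bot_le
  rw [Submodule.mem_bot]
  exact MvPolynomial.ext _ _ fun m => by
    have := (mem_mpE σ).mp hF m
    simpa using this

lemma psE_ne_bot {I : Submodule R R} (hI : I ≠ ⊥) : psE σ I ≠ ⊥ := by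
  obtain ⟨x, hx, hx0⟩ := (Submodule.ne_bot_iff _).mp hI
  refine (Submodule.ne_bot_iff _).mpr ⟨MvPowerSeries.C (σ := σ) x, ?_, fun h => hx0 ?_⟩
  · intro m
    classical
    rw [MvPowerSeries.coeff_C]
    split
    · exact hx
    · exact I.zero_mem
  · have := congrArg (MvPowerSeries.coeff (0 : σ →₀ ℕ)) h
    rwa [MvPowerSeries.coeff_zero_C, map_zero] at this

lemma mpE_ne_bot {I : Submodule R R} (hI : I ≠ ⊥) : mpE σ I ≠ ⊥ := by
  obtain ⟨x, hx, hx0⟩ := (Submodule.ne_bot_iff _).mp hI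
  refine (Submodule.ne_bot_iff _).mpr ⟨MvPolynomial.C x, ?_, fun h => hx0 ?_⟩
  · intro m
    classical
    rw [MvPolynomial.coeff_C]
    split
    · exact hx
    · exact I.zero_mem
  · have := congrArg (MvPolynomial.coeff 0) h
    rwa [MvPolynomial.coeff_zero_C, MvPolynomial.coeff_zero] at this

lemma psE_mono : Monotone (psE (R := R) σ) := fun I J hIJ F hF m => hIJ (hF m)

lemma mpE_mono : Monotone (mpE (R := R) σ) := fun I J hIJ F hF m => hIJ (hF m)

lemma psE_inf (I J : Submodule R R) : psE σ I ⊓ psE σ J = psE σ (I ⊓ J) := by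
  ext F
  exact ⟨fun ⟨h1, h2⟩ m => ⟨h1 m, h2 m⟩, fun h => ⟨fun m => (h m).1, fun m => (h m).2⟩⟩

lemma mpE_inf (I J : Submodule R R) : mpE σ I ⊓ mpE σ J = mpE σ (I ⊓ J) := by
  ext F
  exact ⟨fun ⟨h1, h2⟩ m => ⟨h1 m, h2 m⟩, fun h => ⟨fun m => (h m).1, fun m => (h m).2⟩⟩

lemma psMap_surjective {B : Type*} [CommRing B] (f : R →+* B) (hf : Function.Surjective f) :
    Function.Surjective (MvPowerSeries.map (σ := σ) f) := by
  intro G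
  refine ⟨(fun m => Function.surjInv hf (MvPowerSeries.coeff m G) : MvPowerSeries σ R), ?_⟩
  apply MvPowerSeries.ext
  intro m
  refine (MvPowerSeries.coeff_map f m _).trans ?_
  rw [show MvPowerSeries.coeff m (fun m => Function.surjInv hf (MvPowerSeries.coeff m G))
      = Function.surjInv hf (MvPowerSeries.coeff m G) from rfl]
  rw [Function.surjInv_eq hf]

lemma psMap_ker (q : Submodule R R) :
    RingHom.ker (MvPowerSeries.map (σ := σ) (Ideal.Quotient.mk (q : Ideal R))) = psE σ q := by
  ext F
  rw [RingHom.mem_ker, mem_psE]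
  constructor
  · intro h m
    have := congrArg (MvPowerSeries.coeff m) h
    rw [MvPowerSeries.coeff_map, map_zero] at this
    exact Ideal.Quotient.eq_zero_iff_mem.mp this
  · intro h
    apply MvPowerSeries.ext
    intro m
    rw [MvPowerSeries.coeff_map, map_zero]
    exact Ideal.Quotient.eq_zero_iff_mem.mpr (h m)

lemma mpMap_ker (q : Submodule R R) :
    RingHom.ker (MvPolynomial.map (σ := σ) (Ideal.Quotient.mk (q : Ideal R))) = mpE σ q := by
  ext F
  rw [RingHom.mem_ker, mem_mpE]
  constructor
  · intro h m
    have := congrArg (MvPolynomial.coeff m) h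
    rw [MvPolynomial.coeff_map, MvPolynomial.coeff_zero] at this
    exact Ideal.Quotient.eq_zero_iff_mem.mp this
  · intro h
    apply MvPolynomial.ext
    intro m
    rw [MvPolynomial.coeff_map, MvPolynomial.coeff_zero]
    exact Ideal.Quotient.eq_zero_iff_mem.mpr (h m)

variable [IsNoetherianRing R]

lemma psE_irred {q : Submodule R R} (hq1 : q ≠ ⊤)
    (hq2 : ∀ N₁ N₂ : Submodule R R, N₁ ⊓ N₂ = q → N₁ = q ∨ N₂ = q) :
    psE σ q ≠ ⊤ ∧ ∀ N₁ N₂, N₁ ⊓ N₂ = psE σ q → N₁ = psE σ q ∨ N₂ = psE σ q := by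
  haveI : Nontrivial (R ⧸ (q : Ideal R)) := Ideal.Quotient.nontrivial_iff.mpr hq1
  have h0 := irred_quot_bot (Ideal.Quotient.mk (q : Ideal R)) Ideal.Quotient.mk_surjective
    (Ideal.mk_ker) hq1 hq2
  have hcore := irred_bot_of_key (B := MvPowerSeries σ (R ⧸ (q : Ideal R)))
    (fun F G hF hG => core_key_ps h0.2 F G hF hG)
  have := irred_transfer_ker (MvPowerSeries.map (σ := σ) (Ideal.Quotient.mk (q : Ideal R)))
    (psMap_surjective σ _ Ideal.Quotient.mk_surjective) hcore.2
  rwa [psMap_ker] at this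

lemma mpE_irred {q : Submodule R R} (hq1 : q ≠ ⊤)
    (hq2 : ∀ N₁ N₂ : Submodule R R, N₁ ⊓ N₂ = q → N₁ = q ∨ N₂ = q) :
    mpE σ q ≠ ⊤ ∧ ∀ N₁ N₂, N₁ ⊓ N₂ = mpE σ q → N₁ = mpE σ q ∨ N₂ = mpE σ q := by
  haveI : Nontrivial (R ⧸ (q : Ideal R)) := Ideal.Quotient.nontrivial_iff.mpr hq1
  have h0 := irred_quot_bot (Ideal.Quotient.mk (q : Ideal R)) Ideal.Quotient.mk_surjective
    (Ideal.mk_ker) hq1 hq2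
  have hcore := irred_bot_of_key (B := MvPolynomial σ (R ⧸ (q : Ideal R)))
    (fun F G hF hG => core_key_poly h0.2 F G hF hG)
  have := irred_transfer_ker (MvPolynomial.map (σ := σ) (Ideal.Quotient.mk (q : Ideal R)))
    (MvPolynomial.map_surjective _ Ideal.Quotient.mk_surjective) hcore.2
  rwa [mpMap_ker] at this

end Extend

section Assembly

lemma psE_finf {R : Type*} [CommRing R] (σ : Type*) {T : Finset (Submodule R R)}
    (h : T.inf id = ⊥) : (T.image (psE σ)).inf id = ⊥ := by
  classical
  refine le_antisymm (fun F hF => ?_) bot_le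
  rw [Submodule.mem_bot]
  have hall : ∀ q ∈ T, F ∈ psE σ q := fun q hq =>
    Submodule.mem_finsetInf.mp hF (psE σ q) (Finset.mem_image_of_mem _ hq)
  apply MvPowerSeries.ext
  intro m
  have hm : MvPowerSeries.coeff m F ∈ T.inf id :=
    Submodule.mem_finsetInf.mpr (fun q hq => hall q hq m)
  rw [h] at hm
  simpa using hm

lemma mpE_finf {R : Type*} [CommRing R] (σ : Type*) {T : Finset (Submodule R R)}
    (h : T.inf id = ⊥) : (T.image (mpE σ)).inf id = ⊥ := by
  classical
  refine le_antisymm (fun F hF => ?_) bot_le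
  rw [Submodule.mem_bot]
  have hall : ∀ q ∈ T, F ∈ mpE σ q := fun q hq =>
    Submodule.mem_finsetInf.mp hF (mpE σ q) (Finset.mem_image_of_mem _ hq)
  apply MvPolynomial.ext
  intro m
  have hm : MvPolynomial.coeff m F ∈ T.inf id :=
    Submodule.mem_finsetInf.mpr (fun q hq => hall q hq m)
  rw [h] at hm
  simpa using hm

lemma extend_indep {R A' : Type*} [CommRing R] [CommRing A']
    (E : Submodule R R → Submodule A' A')
    (hmono : Monotone E) (hbot : E ⊥ = ⊥) (hinf : ∀ I J, E I ⊓ E J = E (I ⊓ J))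
    (hne : ∀ I, I ≠ ⊥ → E I ≠ ⊥)
    {s : ℕ} (g : Fin s → Submodule R R) (hind : iSupIndep g) (hgne : ∀ i, g i ≠ ⊥) :
    iSupIndep (fun i => E (g i)) ∧ ∀ i, E (g i) ≠ ⊥ := by
  refine ⟨fun i => ?_, fun i => hne _ (hgne i)⟩
  rw [disjoint_iff]
  refine le_bot_iff.mp ?_
  have h1 : (⨆ (j) (_ : j ≠ i), E (g j)) ≤ E (⨆ (j) (_ : j ≠ i), g j) :=
    iSup₂_le fun j hj => hmono (le_iSup₂ (f := fun j _ => g j) j hj)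
  calc E (g i) ⊓ ⨆ (j) (_ : j ≠ i), E (g j)
      ≤ E (g i) ⊓ E (⨆ (j) (_ : j ≠ i), g j) := inf_le_inf_left _ h1
    _ = E (g i ⊓ ⨆ (j) (_ : j ≠ i), g j) := hinf _ _
    _ = E ⊥ := by rw [(hind i).eq_bot]
    _ = ⊥ := hbot

def SAll (A : Type*) [CommRing A] : Set ℕ :=
  {n | ∃ T : Finset (Submodule A A), T.card = n ∧ (∀ N ∈ T, IsIrredSubmodule A A N) ∧
    T.inf id = ⊥}

lemma irIndex_eq_sAll (A : Type*) [CommRing A] : irIndex A A = sInf (SAll A) := by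
  classical
  unfold irIndex
  have hred : ∀ n ∈ SAll A, ∃ n', n' ≤ n ∧
      (∃ T : Finset (Submodule A A), T.card = n' ∧ (∀ N ∈ T, IsIrredSubmodule A A N) ∧
        T.inf id = ⊥ ∧ ∀ N ∈ T, (T.erase N).inf id ≠ ⊥) := by
    rintro n ⟨T, rfl, hT2, hT3⟩
    obtain ⟨t, htsub, htinf, hterase⟩ := Submodule.decomposition_erase_inf (N := (⊥ : Submodule A A)) hT3
    refine ⟨t.card, Finset.card_le_card htsub, t, rfl, fun N hN => hT2 N (htsub hN), htinf, ?_⟩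
    intro N hN hbot
    exact hterase hN (by rw [hbot]; exact bot_le)
  rcases Set.eq_empty_or_nonempty (SAll A) with hemp | hne
  · have hsub : {n | ∃ T : Finset (Submodule A A), T.card = n ∧
        (∀ N ∈ T, IsIrredSubmodule A A N) ∧ T.inf id = ⊥ ∧
        ∀ N ∈ T, (T.erase N).inf id ≠ ⊥} = ∅ := by
      rw [Set.eq_empty_iff_forall_notMem]
      rintro n ⟨T, h1, h2, h3, h4⟩
      rw [Set.eq_empty_iff_forall_notMem] at hemp
      exact hemp n ⟨T, h1, h2, h3⟩
    rw [hemp, hsub]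
  · obtain ⟨n', hn'le, hT⟩ := hred _ (Nat.sInf_mem hne)
    apply le_antisymm
    · exact le_trans (Nat.sInf_le hT) hn'le
    · have hS1ne : ∃ m, m ∈ {n | ∃ T : Finset (Submodule A A), T.card = n ∧
          (∀ N ∈ T, IsIrredSubmodule A A N) ∧ T.inf id = ⊥ ∧
          ∀ N ∈ T, (T.erase N).inf id ≠ ⊥} := ⟨n', hT⟩
      obtain ⟨T, h1, h2, h3, h4⟩ := Nat.sInf_mem hS1ne
      exact Nat.sInf_le ⟨T, h1, h2, h3⟩

lemma master {R A' : Type*} [CommRing R] [IsNoetherianRing R] [Nontrivial R] [CommRing A']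
    (E : Submodule R R → Submodule A' A')
    (hmono : Monotone E) (hbot : E ⊥ = ⊥) (hinf : ∀ I J, E I ⊓ E J = E (I ⊓ J))
    (hne : ∀ I, I ≠ ⊥ → E I ≠ ⊥)
    (hirr : ∀ q : Submodule R R, IsIrredSubmodule R R q → IsIrredSubmodule A' A' (E q))
    (hfinf : ∀ T : Finset (Submodule R R), T.inf id = ⊥ → (T.image E).inf id = ⊥) :
    sInf (SAll R) = sInf (SAll A') := by
  classical
  have hRne : (SAll R).Nonempty := by
    obtain ⟨T, hTinf, hTirr⟩ := exists_infIrred_decomposition (⊥ : Ideal R)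
    exact ⟨T.card, T, rfl, fun N hN => ⟨(hTirr hN).ne_top,
      fun N₁ N₂ h => (hTirr hN).2 h⟩, hTinf⟩
  obtain ⟨T₀, hT₀card, hT₀irr, hT₀inf⟩ := Nat.sInf_mem hRne
  have hAmem : (T₀.image E).card ∈ SAll A' := by
    refine ⟨T₀.image E, rfl, ?_, hfinf T₀ hT₀inf⟩
    intro N hN
    obtain ⟨q, hq, rfl⟩ := Finset.mem_image.mp hN
    exact hirr q (hT₀irr q hq)
  have hAle : sInf (SAll A') ≤ sInf (SAll R) :=
    le_trans (Nat.sInf_le hAmem) (le_trans Finset.card_image_le (le_of_eq hT₀card))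
  refine le_antisymm ?_ hAle
  obtain ⟨T₁, hT₁card, hT₁irr, hT₁inf⟩ := Nat.sInf_mem ⟨_, hAmem⟩
  have HB : ∀ (s : ℕ) (g : Fin s → Submodule R R), iSupIndep g → (∀ i, g i ≠ ⊥) →
      s ≤ sInf (SAll A') := by
    intro s g hind hgne
    have hext := extend_indep E hmono hbot hinf hne g hind hgne
    have hcard := IrIndexProof.indep_le_card
      (fun q hq => ⟨(hT₁irr q hq).1, (hT₁irr q hq).2⟩) hT₁inf
      (fun i => E (g i)) hext.1 hext.2
    rwa [hT₁card] at hcard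
  obtain ⟨T₂, hT₂card, hT₂irr, hT₂inf⟩ := IrIndexProof.exists_decomp_card_le HB
  exact le_trans (Nat.sInf_le ⟨T₂, rfl, fun N hN =>
    ⟨(hT₂irr N hN).1, (hT₂irr N hN).2⟩, hT₂inf⟩) hT₂card

end Assembly

end IrIndexProof

/-- For a nonzero Noetherian ring `R` and `n ≥ 1`,
`ir(R) = ir(R[x₁,…,xₙ]) = ir(R[[x₁,…,xₙ]])`. -/
theorem irIndex_polynomial_powerSeries (R : Type*) [CommRing R] [IsNoetherianRing R]
    [Nontrivial R] (n : ℕ) (hn : 0 < n) :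
    irIndex R R = irIndex (MvPolynomial (Fin n) R) (MvPolynomial (Fin n) R) ∧
      irIndex R R = irIndex (MvPowerSeries (Fin n) R) (MvPowerSeries (Fin n) R) := by
  constructor
  · rw [IrIndexProof.irIndex_eq_sAll R,
      IrIndexProof.irIndex_eq_sAll (MvPolynomial (Fin n) R)]
    exact IrIndexProof.master (IrIndexProof.mpE (Fin n))
      (IrIndexProof.mpE_mono (Fin n)) (IrIndexProof.mpE_bot (Fin n))
      (IrIndexProof.mpE_inf (Fin n)) (fun I hI => IrIndexProof.mpE_ne_bot (Fin n) hI)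
      (fun q hq => IrIndexProof.mpE_irred (Fin n) hq.1 hq.2)
      (fun T hT => IrIndexProof.mpE_finf (Fin n) hT)
  · rw [IrIndexProof.irIndex_eq_sAll R,
      IrIndexProof.irIndex_eq_sAll (MvPowerSeries (Fin n) R)]
    exact IrIndexProof.master (IrIndexProof.psE (Fin n))
      (IrIndexProof.psE_mono (Fin n)) (IrIndexProof.psE_bot (Fin n))
      (IrIndexProof.psE_inf (Fin n)) (fun I hI => IrIndexProof.psE_ne_bot (Fin n) hI)
      (fun q hq => IrIndexProof.psE_irred (Fin n) hq.1 hq.2)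
      (fun T hT => IrIndexProof.psE_finf (Fin n) hT)
end

section
/- Let S = k[x_1, …, x_n] be the polynomial ring in n variables over a field k and let f ∈ S be a nonzero non-unit polynomial. Then ir(S/fS) = 1 if and only if f = α · p^m for some nonzero α ∈ k, some positive integer m, and some irreducible polynomial p ∈ S. -/
set_option synthInstance.maxHeartbeats 1000000

/-- An ideal is irreducible: proper and not an intersection of two strictly larger ideals. -/
def IsIrredIdeal {S : Type*} [CommRing S] (I : Ideal S) : Prop :=
  I ≠ ⊤ ∧ ∀ J₁ J₂ : Ideal S, J₁ ⊓ J₂ = I → J₁ = I ∨ J₂ = I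

open Classical in
lemma split_pow {S : Type*} [CommRing S] {p a : S} {m : ℕ}
    (h : ¬ p ^ m ∣ a) : ∃ (i : ℕ) (b : S), i < m ∧ a = p ^ i * b ∧ ¬ p ∣ b := by
  have hex : ∃ j, ¬ p ^ j ∣ a := ⟨m, h⟩
  set j := Nat.find hex with hj
  have hspec : ¬ p ^ j ∣ a := Nat.find_spec hex
  have hj0 : j ≠ 0 := by
    intro h0
    exact hspec (by simp [h0])
  have hjm : j ≤ m := Nat.find_min' hex h
  have hdvd : p ^ (j - 1) ∣ a := by
    by_contra hc
    exact absurd (Nat.find_min' hex hc) (by omega)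
  obtain ⟨b, hb⟩ := hdvd
  refine ⟨j - 1, b, by omega, hb, ?_⟩
  intro ⟨c, hc⟩
  apply hspec
  have : j = (j - 1) + 1 := by omega
  rw [this, pow_succ, hb, hc]
  ring_nf
  exact Dvd.intro c rfl

/-- In a domain, the ideal generated by a prime power is irreducible. -/
lemma isIrredIdeal_span_prime_pow {S : Type*} [CommRing S] [IsDomain S] {p : S}
    (hp : Prime p) {m : ℕ} (hm : 0 < m) : IsIrredIdeal (Ideal.span {p ^ m}) := by
  constructor
  · rw [Ne, Ideal.span_singleton_eq_top]
    exact fun h => hp.not_unit ((isUnit_pow_iff hm.ne').mp h)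
  · intro J₁ J₂ hJ
    by_contra hcon
    push_neg at hcon
    obtain ⟨h1, h2⟩ := hcon
    have hle1 : Ideal.span {p ^ m} ≤ J₁ := hJ ▸ inf_le_left
    have hle2 : Ideal.span {p ^ m} ≤ J₂ := hJ ▸ inf_le_right
    obtain ⟨a, haJ, ha⟩ := SetLike.exists_of_lt (lt_of_le_of_ne hle1 (Ne.symm h1))
    obtain ⟨b, hbJ, hb⟩ := SetLike.exists_of_lt (lt_of_le_of_ne hle2 (Ne.symm h2))
    rw [Ideal.mem_span_singleton] at ha hb
    obtain ⟨i, a', hi, hae, ha'⟩ := split_pow ha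
    obtain ⟨l, b', hl, hbe, hb'⟩ := split_pow hb
    have e1 : p ^ (m - 1) * a' = p ^ (m - 1 - i) * a := by
      rw [hae, ← mul_assoc, ← pow_add]
      congr 2
      omega
    have e2 : p ^ (m - 1) * b' = p ^ (m - 1 - l) * b := by
      rw [hbe, ← mul_assoc, ← pow_add]
      congr 2
      omega
    set c := p ^ (m - 1) * a' * b' with hc
    have hc1 : c ∈ J₁ := by
      have : (p ^ (m - 1 - i) * a) * b' ∈ J₁ :=
        J₁.mul_mem_right _ (J₁.mul_mem_left _ haJ)
      rwa [← e1] at this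
    have hc2 : c ∈ J₂ := by
      have : a' * (p ^ (m - 1 - l) * b) ∈ J₂ :=
        J₂.mul_mem_left _ (J₂.mul_mem_left _ hbJ)
      rw [← e2] at this
      rwa [show a' * (p ^ (m-1) * b') = c by ring] at this
    have hcmem : c ∈ Ideal.span {p ^ m} := by
      rw [← hJ]; exact ⟨hc1, hc2⟩
    rw [Ideal.mem_span_singleton] at hcmem
    obtain ⟨d, hd⟩ := hcmem
    have hm1 : (m - 1) + 1 = m := by omega
    have hpow : (p : S) ^ (m - 1) ≠ 0 := pow_ne_zero _ hp.ne_zero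
    have : a' * b' = p * d := by
      apply mul_left_cancel₀ hpow
      rw [← mul_assoc, ← hc, hd]
      calc p ^ m * d = p ^ ((m - 1) + 1) * d := by rw [hm1]
        _ = p ^ (m - 1) * (p * d) := by rw [pow_succ]; ring
    rcases hp.dvd_mul.mp ⟨d, this⟩ with h | h
    · exact ha' h
    · exact hb' h

/-- If the principal ideal (f) is irreducible in a UFD, f is a unit times a prime power. -/
lemma exists_prime_pow_of_isIrredIdeal {S : Type*} [CommRing S] [IsDomain S]
    [UniqueFactorizationMonoid S] {f : S} (hf0 : f ≠ 0) (hfu : ¬IsUnit f)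
    (h : IsIrredIdeal (Ideal.span {f})) :
    ∃ (u q : S) (m : ℕ), IsUnit u ∧ Prime q ∧ 0 < m ∧ f = u * q ^ m := by
  obtain ⟨q, hqirr, hqdvd⟩ := WfDvdMonoid.exists_irreducible_factor hfu hf0
  have hq : Prime q := UniqueFactorizationMonoid.irreducible_iff_prime.mp hqirr
  obtain ⟨n0, hn0⟩ := FiniteMultiplicity.of_prime_left hq hf0
  obtain ⟨i, g, _, hfe, hgp⟩ := split_pow hn0
  have hi1 : 0 < i := by
    rcases Nat.eq_zero_or_pos i with h0 | h0
    · exact absurd (by rw [hfe, h0, pow_zero, one_mul] at hqdvd; exact hqdvd) hgp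
    · exact h0
  by_cases hgu : IsUnit g
  · exact ⟨g, q, i, hgu, hq, hi1, by rw [hfe]; ring⟩
  exfalso
  have hg0 : g ≠ 0 := by
    intro h0
    exact hf0 (by rw [hfe, h0, mul_zero])
  have hinf : Ideal.span {q ^ i} ⊓ Ideal.span {g} = Ideal.span {f} := by
    ext x
    simp only [Ideal.mem_inf, Ideal.mem_span_singleton]
    constructor
    · rintro ⟨hqx, hgx⟩
      obtain ⟨y, rfl⟩ := hgx
      obtain ⟨z, hz⟩ := hq.pow_dvd_of_dvd_mul_left i hgp hqx
      exact ⟨z, by rw [hfe, hz]; ring⟩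
    · rintro ⟨y, rfl⟩
      exact ⟨⟨g * y, by rw [hfe]; ring⟩, ⟨q ^ i * y, by rw [hfe]; ring⟩⟩
  rcases h.2 _ _ hinf with h1 | h1
  · rw [Ideal.span_singleton_eq_span_singleton] at h1
    obtain ⟨u, hu⟩ := h1
    have hqi0 : (q : S) ^ i ≠ 0 := pow_ne_zero _ hq.ne_zero
    have : g = (u : S) := mul_left_cancel₀ hqi0 (by rw [← hfe, ← hu])
    exact hgu (this ▸ u.isUnit)
  · rw [Ideal.span_singleton_eq_span_singleton] at h1
    obtain ⟨u, hu⟩ := h1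
    have : (u : S) = q ^ i := mul_left_cancel₀ hg0 (by
      rw [hu, hfe]; ring)
    have : IsUnit ((q : S) ^ i) := this ▸ u.isUnit
    exact hq.not_unit ((isUnit_pow_iff hi1.ne').mp this)

lemma isIrredSubmodule_bot_iff {S : Type*} [CommRing S] (I : Ideal S) :
    IsIrredSubmodule (S ⧸ I) (S ⧸ I) ⊥ ↔ IsIrredIdeal I := by
  have hsurj : Function.Surjective (Ideal.Quotient.mk I) := Ideal.Quotient.mk_surjective
  have hker : Ideal.comap (Ideal.Quotient.mk I) (⊥ : Ideal (S ⧸ I)) = I := by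
    simpa [RingHom.ker] using Ideal.mk_ker (I := I)
  have hcinj : Function.Injective (Ideal.comap (Ideal.Quotient.mk I)) :=
    Ideal.comap_injective_of_surjective _ hsurj
  constructor
  · rintro ⟨hbot, hdec⟩
    constructor
    · intro htop
      apply hbot
      have : Subsingleton (S ⧸ I) := Ideal.Quotient.subsingleton_iff.mpr htop
      exact Subsingleton.elim _ _
    · intro J₁ J₂ hJ
      have hle1 : I ≤ J₁ := hJ ▸ inf_le_left
      have hle2 : I ≤ J₂ := hJ ▸ inf_le_right
      have hcm1 : Ideal.comap (Ideal.Quotient.mk I) (Ideal.map (Ideal.Quotient.mk I) J₁) = J₁ := by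
        rw [Ideal.comap_map_of_surjective _ hsurj, hker, sup_eq_left.mpr hle1]
      have hcm2 : Ideal.comap (Ideal.Quotient.mk I) (Ideal.map (Ideal.Quotient.mk I) J₂) = J₂ := by
        rw [Ideal.comap_map_of_surjective _ hsurj, hker, sup_eq_left.mpr hle2]
      have hmap : Ideal.map (Ideal.Quotient.mk I) J₁ ⊓ Ideal.map (Ideal.Quotient.mk I) J₂ = ⊥ := by
        apply hcinj
        rw [Ideal.comap_inf, hcm1, hcm2, hJ, hker]
      rcases hdec _ _ hmap with h | h
      · left; rw [← hcm1, h, hker]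
      · right; rw [← hcm2, h, hker]
  · rintro ⟨htop, hdec⟩
    constructor
    · intro hbot
      apply htop
      rw [← hker, hbot, Ideal.comap_top]
    · intro N₁ N₂ hN
      have hc : Ideal.comap (Ideal.Quotient.mk I) N₁ ⊓ Ideal.comap (Ideal.Quotient.mk I) N₂
          = I := by
        rw [← Ideal.comap_inf, hN, hker]
      rcases hdec _ _ hc with h | h
      · left; exact hcinj (by rw [h, hker])
      · right; exact hcinj (by rw [h, hker])

lemma irIndex_eq_one_iff (R M : Type*) [CommRing R] [AddCommGroup M] [Module R M]
    [Nontrivial M] : irIndex R M = 1 ↔ IsIrredSubmodule R M ⊥ := by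
  classical
  set Q := {n | ∃ T : Finset (Submodule R M), T.card = n ∧ (∀ N ∈ T, IsIrredSubmodule R M N) ∧
    T.inf id = ⊥ ∧ ∀ N ∈ T, (T.erase N).inf id ≠ ⊥} with hQ
  have hbt : (⊥ : Submodule R M) ≠ ⊤ := bot_ne_top
  have h0 : 0 ∉ Q := by
    rintro ⟨T, hcard, -, hinf, -⟩
    rw [Finset.card_eq_zero] at hcard
    subst hcard
    simp only [Finset.inf_empty] at hinf
    exact hbt hinf.symm
  have h1 : 1 ∈ Q ↔ IsIrredSubmodule R M ⊥ := by
    constructor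
    · rintro ⟨T, hcard, hirr, hinf, -⟩
      rw [Finset.card_eq_one] at hcard
      obtain ⟨N, rfl⟩ := hcard
      simp only [Finset.inf_singleton, id] at hinf
      subst hinf
      exact hirr _ (Finset.mem_singleton_self _)
    · intro hI
      refine ⟨{⊥}, Finset.card_singleton _, ?_, by simp, ?_⟩
      · intro N hN
        rw [Finset.mem_singleton] at hN
        subst hN
        exact hI
      · intro N hN
        rw [Finset.mem_singleton] at hN
        subst hN
        simpa using hbt.symm
  show sInf Q = 1 ↔ _
  rw [← h1]
  constructor
  · intro hs
    have hne : Q.Nonempty := by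
      by_contra hcon
      rw [Set.not_nonempty_iff_eq_empty] at hcon
      rw [hcon, Nat.sInf_empty] at hs
      exact one_ne_zero hs.symm
    have := Nat.sInf_mem hne
    rwa [hs] at this
  · intro hmem
    have hle : sInf Q ≤ 1 := Nat.sInf_le hmem
    have hne0 : sInf Q ≠ 0 := by
      intro hz
      exact h0 (hz ▸ Nat.sInf_mem ⟨1, hmem⟩)
    omega

lemma mv_unit_eq_C {k : Type*} [Field k] : ∀ {n : ℕ} {f : MvPolynomial (Fin n) k},
    IsUnit f → ∃ α : k, α ≠ 0 ∧ f = MvPolynomial.C α := by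
  intro n
  induction n with
  | zero =>
    intro f hf
    set e := MvPolynomial.isEmptyAlgEquiv k (Fin 0)
    refine ⟨e f, ?_, ?_⟩
    · have : IsUnit (e f) := hf.map e
      exact this.ne_zero
    · apply e.injective
      have : e (MvPolynomial.C (e f)) = e f := by
        rw [← MvPolynomial.algebraMap_eq, AlgEquiv.commutes]
        simp
      rw [this]
  | succ n ih =>
    intro f hf
    set e := MvPolynomial.finSuccEquiv k n
    have hef : IsUnit (e f) := hf.map e
    have hdeg : (e f).degree = 0 := Polynomial.degree_eq_zero_of_isUnit hef
    have hefC : e f = Polynomial.C ((e f).coeff 0) := Polynomial.eq_C_of_degree_eq_zero hdeg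
    have hcu : IsUnit ((e f).coeff 0) := Polynomial.isUnit_C.mp (hefC ▸ hef)
    obtain ⟨α, hα0, hαe⟩ := ih hcu
    refine ⟨α, hα0, ?_⟩
    apply e.injective
    have : e (MvPolynomial.C α) = Polynomial.C (MvPolynomial.C α) := by
      rw [← MvPolynomial.algebraMap_eq, AlgEquiv.commutes, Polynomial.algebraMap_apply,
        MvPolynomial.algebraMap_eq]
    rw [this, hefC, hαe]


/-- For the polynomial ring `S = k[x₁,…,xₙ]` over a field `k` and a nonzero non-unit
`f ∈ S`, `ir(S/fS) = 1` iff `f = α · pᵐ` with `α ∈ k` nonzero, `m ≥ 1` and `p` irreducible. -/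
theorem irIndex_quotient_principal_eq_one_iff (k : Type*) [Field k] (n : ℕ)
    (f : MvPolynomial (Fin n) k) (hf0 : f ≠ 0) (hfu : ¬IsUnit f) :
    irIndex (MvPolynomial (Fin n) k ⧸ Ideal.span {f})
        (MvPolynomial (Fin n) k ⧸ Ideal.span {f}) = 1 ↔
      ∃ (α : k) (m : ℕ) (p : MvPolynomial (Fin n) k),
        α ≠ 0 ∧ 0 < m ∧ Irreducible p ∧ f = MvPolynomial.C α * p ^ m := by
  
  classical
  have hItop : Ideal.span {f} ≠ ⊤ := by
    rw [Ne, Ideal.span_singleton_eq_top]; exact hfu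
  have : Nontrivial (MvPolynomial (Fin n) k ⧸ Ideal.span {f}) := Ideal.Quotient.nontrivial_iff.mpr hItop
  rw [irIndex_eq_one_iff, isIrredSubmodule_bot_iff]
  constructor
  · intro h
    obtain ⟨u, q, m, hu, hq, hm, hfe⟩ := exists_prime_pow_of_isIrredIdeal hf0 hfu h
    obtain ⟨α, hα, rfl⟩ := mv_unit_eq_C hu
    exact ⟨α, m, q, hα, hm, hq.irreducible, hfe⟩
  · rintro ⟨α, m, p, hα, hm, hp, rfl⟩
    have hprime : Prime p := UniqueFactorizationMonoid.irreducible_iff_prime.mp hp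
    have hCu : IsUnit (MvPolynomial.C α : MvPolynomial (Fin n) k) :=
      (hα.isUnit).map (MvPolynomial.C : k →+* MvPolynomial (Fin n) k)
    have hspan : Ideal.span {(MvPolynomial.C α : MvPolynomial (Fin n) k) * p ^ m} = Ideal.span {p ^ m} := by
      rw [Ideal.span_singleton_eq_span_singleton]
      exact ⟨hCu.unit⁻¹, by rw [mul_comm, ← mul_assoc, IsUnit.val_inv_mul, one_mul]⟩
    rw [hspan]
    exact isIrredIdeal_span_prime_pow hprime hm
end

section
/- Let R be a commutative Noetherian ring and A a nonzero Artinian R-module. Then ir'_R(A) ≥ Card(Att_R(A)), the number of attached primes of A. -/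
/-- A submodule `B` of `A` is sum-irreducible if it is nonzero and cannot be written as the
sum of two strictly smaller submodules. -/
def IsSumIrredSubmodule (R A : Type*) [CommRing R] [AddCommGroup A] [Module R A]
    (B : Submodule R A) : Prop :=
  B ≠ ⊥ ∧ ∀ C D : Submodule R A, C ⊔ D = B → C = B ∨ D = B

open Classical in
/-- The sum-reducibility index `ir'_R(A)`: the number of components in an irredundant
representation of `A` as a sum of sum-irreducible submodules. -/
noncomputable def coirIndex (R A : Type*) [CommRing R] [AddCommGroup A] [Module R A] : ℕ :=
  sInf {n | ∃ T : Finset (Submodule R A), T.card = n ∧ (∀ B ∈ T, IsSumIrredSubmodule R A B) ∧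
    T.sup id = ⊤ ∧ ∀ B ∈ T, (T.erase B).sup id ≠ ⊤}

/-- A nonzero submodule `B` of `A` is `p`-secondary if multiplication by every `a ∈ p` is
nilpotent on `B` and multiplication by every `a ∉ p` is surjective on `B`. -/
def IsSecondarySubmodule (R A : Type*) [CommRing R] [AddCommGroup A] [Module R A]
    (p : Ideal R) (B : Submodule R A) : Prop :=
  B ≠ ⊥ ∧ (∀ a ∈ p, ∃ n : ℕ, ∀ x ∈ B, a ^ n • x = (0 : A)) ∧
    ∀ a ∉ p, ∀ x ∈ B, ∃ y ∈ B, a • y = x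

/-- A minimal secondary representation of `A`: `A = B 0 + … + B (n-1)` with `B i`
`p i`-secondary, the `p i` pairwise distinct primes, and no `B i` redundant. -/
def IsMinimalSecondaryRep (R A : Type*) [CommRing R] [AddCommGroup A] [Module R A]
    {n : ℕ} (B : Fin n → Submodule R A) (p : Fin n → Ideal R) : Prop :=
  (∀ i, (p i).IsPrime) ∧ (∀ i, IsSecondarySubmodule R A (p i) (B i)) ∧
    Function.Injective p ∧ (⨆ i, B i) = ⊤ ∧
    ∀ i : Fin n, (⨆ j ∈ ({i}ᶜ : Set (Fin n)), B j) ≠ ⊤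


section Aux
variable {R A : Type*} [CommRing R] [AddCommGroup A] [Module R A]

lemma smul_pow_surjOn {B : Submodule R A} {b : R}
    (hb : ∀ x ∈ B, ∃ y ∈ B, b • y = x) (k : ℕ) :
    ∀ x ∈ B, ∃ y ∈ B, b ^ k • y = x := by
  induction k with
  | zero => exact fun x hx => ⟨x, hx, by simp⟩
  | succ k ih =>
    intro x hx
    obtain ⟨y, hy, hyx⟩ := hb x hx
    obtain ⟨z, hz, hzy⟩ := ih y hy
    exact ⟨z, hz, by rw [pow_succ, mul_comm, mul_smul, hzy, hyx]⟩

/-- image of a secondary submodule is bot or secondary -/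
lemma IsSecondarySubmodule.map {M : Type*} [AddCommGroup M] [Module R M]
    {p : Ideal R} {B : Submodule R A} (h : IsSecondarySubmodule R A p B)
    (f : A →ₗ[R] M) :
    B.map f = ⊥ ∨ IsSecondarySubmodule R M p (B.map f) := by
  by_cases hbot : B.map f = ⊥
  · exact Or.inl hbot
  · refine Or.inr ⟨hbot, ?_, ?_⟩
    · intro a ha
      obtain ⟨n, hn⟩ := h.2.1 a ha
      refine ⟨n, ?_⟩
      rintro x ⟨y, hy, rfl⟩
      rw [← f.map_smul, hn y hy, f.map_zero]
    · intro a ha x hx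
      obtain ⟨y, hy, rfl⟩ := hx
      obtain ⟨z, hz, hzy⟩ := h.2.2 a ha y hy
      exact ⟨f z, Submodule.mem_map_of_mem hz, by rw [← f.map_smul, hzy]⟩

lemma sumIrred_secondary [IsArtinian R A] {B : Submodule R A}
    (hB : IsSumIrredSubmodule R A B) :
    ∃ p : Ideal R, p.IsPrime ∧ IsSecondarySubmodule R A p B := by
  classical
  set P : Ideal R := B.annihilator.radical with hP
  have hmemP : ∀ a : R, a ∈ P ↔ ∃ n : ℕ, ∀ x ∈ B, a ^ n • x = 0 := by
    intro a
    constructor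
    · rintro ⟨n, hn⟩
      exact ⟨n, fun x hx => Submodule.mem_annihilator.mp hn x hx⟩
    · rintro ⟨n, hn⟩
      exact ⟨n, Submodule.mem_annihilator.mpr fun x hx => hn x hx⟩
  have dich : ∀ a : R, a ∈ P ∨ ∀ x ∈ B, ∃ y ∈ B, a • y = x := by
    intro a
    set f : A →ₗ[R] A := LinearMap.lsmul R A a with hf
    have hfs : ∀ (m : ℕ) (y : A), (f ^ m) y = a ^ m • y := by
      intro m y
      induction m with
      | zero => simp
      | succ m ih =>
        have h1 : (f ^ (m + 1)) y = f ((f ^ m) y) := by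
          rw [← Module.End.mul_apply, ← pow_succ']
        rw [h1, ih, pow_succ, mul_comm, mul_smul]; rfl
    have hpowB : ∀ (m : ℕ) (y : A), y ∈ B → (f ^ m) y ∈ B := by
      intro m y hy
      rw [hfs]
      exact Submodule.smul_mem B _ hy
    have hmono : ∀ j k : ℕ, j ≤ k → B.map (f ^ k) ≤ B.map (f ^ j) := by
      intro j k hjk
      obtain ⟨m, rfl⟩ := Nat.exists_eq_add_of_le hjk
      rintro x ⟨y, hy, rfl⟩
      have : (f ^ (j + m)) y = (f ^ j) ((f ^ m) y) := by
        rw [← Module.End.mul_apply, ← pow_add, add_comm]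
      rw [this]
      exact Submodule.mem_map_of_mem (hpowB m y hy)
    set D : ℕ →o (Submodule R A)ᵒᵈ :=
      ⟨fun k => OrderDual.toDual (B.map (f ^ k)), fun j k hjk => hmono j k hjk⟩ with hD
    obtain ⟨k0, hk0⟩ := IsArtinian.monotone_stabilizes D
    set k := k0 + 1 with hk
    have hstab : B.map (f ^ k) = B.map (f ^ (2 * k)) := by
      have h1 := hk0 k (by omega)
      have h2 := hk0 (2 * k) (by omega)
      have := h1.symm.trans h2
      exact congrArg OrderDual.ofDual this
    have hfit : B.map (f ^ k) ⊔ (B ⊓ LinearMap.ker (f ^ k)) = B := by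
      apply le_antisymm
      · refine sup_le ?_ inf_le_left
        rintro x ⟨y, hy, rfl⟩
        exact hpowB k y hy
      · intro x hx
        have hfx : (f ^ k) x ∈ B.map (f ^ (2 * k)) := by
          rw [← hstab]; exact Submodule.mem_map_of_mem hx
        obtain ⟨y, hy, hyx⟩ := hfx
        have hker : x - (f ^ k) y ∈ B ⊓ LinearMap.ker (f ^ k) := by
          rw [Submodule.mem_inf]
          refine ⟨Submodule.sub_mem B hx (hpowB k y hy), ?_⟩
          rw [LinearMap.mem_ker, map_sub]
          have : (f ^ k) ((f ^ k) y) = (f ^ (2 * k)) y := by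
            rw [← Module.End.mul_apply, ← pow_add, two_mul]
          rw [this, hyx, sub_self]
        have hxeq : x = (f ^ k) y + (x - (f ^ k) y) := by abel
        rw [hxeq]
        exact Submodule.add_mem _
          (Submodule.mem_sup_left (Submodule.mem_map_of_mem hy))
          (Submodule.mem_sup_right hker)
    rcases hB.2 _ _ hfit with hsurj | hnil
    · right
      intro x hx
      have hx' : x ∈ B.map (f ^ k) := by rw [hsurj]; exact hx
      obtain ⟨y, hy, hyx⟩ := hx'
      refine ⟨(f ^ k0) y, hpowB k0 y hy, ?_⟩
      rw [hfs] at hyx ⊢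
      rw [← hyx, ← mul_smul, ← pow_succ']
    · left
      rw [hmemP]
      refine ⟨k, fun x hx => ?_⟩
      have hxm : x ∈ B ⊓ LinearMap.ker (f ^ k) := by rw [hnil]; exact hx
      have hk' := (Submodule.mem_inf.mp hxm).2
      rw [LinearMap.mem_ker, hfs] at hk'
      exact hk'
  have hne : P ≠ ⊤ := by
    intro htop
    have h1 : (1 : R) ∈ P := htop ▸ Submodule.mem_top
    rw [hmemP] at h1
    obtain ⟨n, hn⟩ := h1
    apply hB.1
    rw [eq_bot_iff]
    intro x hx
    simpa using hn x hx
  have hprime : P.IsPrime := by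
    refine ⟨hne, ?_⟩
    intro a b hab
    by_cases ha : a ∈ P
    · exact Or.inl ha
    · right
      rcases dich a with h | hsurj
      · exact absurd h ha
      rw [hmemP] at hab ⊢
      obtain ⟨n, hn⟩ := hab
      refine ⟨n, fun x hx => ?_⟩
      obtain ⟨y, hy, hyx⟩ := smul_pow_surjOn hsurj n x hx
      rw [← hyx, smul_comm, ← mul_smul, ← mul_pow, hn y hy]
  refine ⟨P, hprime, hB.1, fun a ha => (hmemP a).mp ha, fun a ha => ?_⟩
  rcases dich a with h | hsurj
  · exact absurd h ha
  · exact hsurj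

/-- existence of a decomposition into sum-irreducibles -/
lemma exists_sumIrred_decomp [IsArtinian R A] (M : Submodule R A) :
    ∃ T : Finset (Submodule R A), (∀ C ∈ T, IsSumIrredSubmodule R A C) ∧ T.sup id = M := by
  classical
  induction M using IsArtinian.induction with
  | _ M ih =>
    by_cases hbot : M = ⊥
    · exact ⟨∅, by simp, by simp [hbot]⟩
    by_cases hirr : IsSumIrredSubmodule R A M
    · exact ⟨{M}, by simpa using hirr, by simp⟩
    · rw [IsSumIrredSubmodule] at hirr
      push_neg at hirr
      obtain ⟨C, D, hCD, hC, hD⟩ := hirr hbot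
      have hCl : C < M := lt_of_le_of_ne (hCD ▸ le_sup_left) hC
      have hDl : D < M := lt_of_le_of_ne (hCD ▸ le_sup_right) hD
      obtain ⟨TC, hTC1, hTC2⟩ := ih C hCl
      obtain ⟨TD, hTD1, hTD2⟩ := ih D hDl
      refine ⟨TC ∪ TD, ?_, ?_⟩
      · intro E hE
        rcases Finset.mem_union.mp hE with h | h
        · exact hTC1 E h
        · exact hTD1 E h
      · rw [Finset.sup_union, hTC2, hTD2, hCD]

/-- irredundant refinement -/
lemma exists_irredundant [DecidableEq (Submodule R A)] (T : Finset (Submodule R A))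
    (hT : ∀ C ∈ T, IsSumIrredSubmodule R A C) (hsup : T.sup id = ⊤) :
    ∃ T' : Finset (Submodule R A), (∀ C ∈ T', IsSumIrredSubmodule R A C) ∧
      T'.sup id = ⊤ ∧ ∀ C ∈ T', (T'.erase C).sup id ≠ ⊤ := by
  suffices H : ∀ (m : ℕ) (T : Finset (Submodule R A)), T.card ≤ m →
      (∀ C ∈ T, IsSumIrredSubmodule R A C) → T.sup id = ⊤ →
      ∃ T' : Finset (Submodule R A), (∀ C ∈ T', IsSumIrredSubmodule R A C) ∧
        T'.sup id = ⊤ ∧ ∀ C ∈ T', (T'.erase C).sup id ≠ ⊤ by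
    exact H T.card T le_rfl hT hsup
  intro m
  induction m with
  | zero =>
    intro T card0 _ hsup
    refine ⟨T, fun C hC => absurd (Finset.card_eq_zero.mp (Nat.le_zero.mp card0) ▸ hC) (Finset.notMem_empty C), hsup, ?_⟩
    intro C hC
    exact absurd (Finset.card_eq_zero.mp (Nat.le_zero.mp card0) ▸ hC) (Finset.notMem_empty C)
  | succ m ih =>
    intro T hcard hT hsup
    by_cases hred : ∃ C ∈ T, (T.erase C).sup id = ⊤
    · obtain ⟨C, hC, hCsup⟩ := hred
      have hcard' : (T.erase C).card ≤ m := by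
        have := Finset.card_erase_lt_of_mem hC
        omega
      exact ih (T.erase C) hcard'
        (fun D hD => hT D (Finset.mem_of_mem_erase hD)) hCsup
    · push_neg at hred
      exact ⟨T, hT, hsup, hred⟩

lemma key_att {M : Type*} [AddCommGroup M] [Module R M] {p : Ideal R} (hp : p.IsPrime)
    (hM : IsSecondarySubmodule R M p ⊤) {ι : Type*} [Fintype ι]
    (D : ι → Submodule R M) (q : ι → Ideal R)
    (hD : ∀ t, D t = ⊥ ∨ IsSecondarySubmodule R M (q t) (D t))
    (hsup : ⨆ t, D t = ⊤) :
    ∃ t, D t ≠ ⊥ ∧ q t = p := by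
  classical
  -- Step 1: find t with D t ≠ ⊥ and q t ⊆ p
  have step1 : ∃ t, D t ≠ ⊥ ∧ q t ≤ p := by
    by_contra h2
    push_neg at h2
    have hchoice : ∀ t, ∃ a : R, a ∉ p ∧ ∃ m : ℕ, ∀ x ∈ D t, a ^ m • x = 0 := by
      intro t
      rcases hD t with hbot | hsec
      · exact ⟨1, (Ideal.ne_top_iff_one p).mp hp.ne_top,
          0, fun x hx => by simp [hbot] at hx; simp [hx]⟩
      · obtain ⟨a, haq, hap⟩ := Set.not_subset.mp (fun hss => (h2 t hsec.1 hss).elim)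
        obtain ⟨m, hm⟩ := hsec.2.1 a haq
        exact ⟨a, hap, m, hm⟩
    choose a hap hnil using hchoice
    choose m hm using hnil
    set b : R := ∏ t, a t with hb
    have hbp : b ∉ p := by
      intro hbmem
      obtain ⟨t, _, hat⟩ := (Ideal.IsPrime.prod_mem_iff).mp hbmem
      exact hap t hat
    set N : ℕ := Finset.univ.sup m with hN
    have hkill : ∀ t, ∀ x ∈ D t, b ^ N • x = 0 := by
      intro t x hx
      have hmt : m t ≤ N := Finset.le_sup (Finset.mem_univ t)
      have hfac : b = a t * ∏ t' ∈ Finset.univ.erase t, a t' :=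
        (Finset.mul_prod_erase _ _ (Finset.mem_univ t)).symm
      rw [hfac, mul_pow, mul_smul]
      have hmem : (∏ t' ∈ Finset.univ.erase t, a t') ^ N • x ∈ D t :=
        Submodule.smul_mem _ _ hx
      have : (a t) ^ N = (a t) ^ (N - m t) * (a t) ^ (m t) := by
        rw [← pow_add, Nat.sub_add_cancel hmt]
      rw [this, mul_smul, hm t _ hmem, smul_zero]
    have hall : ∀ x : M, b ^ N • x = 0 := by
      intro x
      have hx : x ∈ LinearMap.ker (LinearMap.lsmul R M (b ^ N)) := by
        have hle : (⊤ : Submodule R M) ≤ LinearMap.ker (LinearMap.lsmul R M (b ^ N)) := by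
          rw [← hsup]
          refine iSup_le fun t => ?_
          intro y hy
          exact LinearMap.mem_ker.mpr (hkill t y hy)
        exact hle Submodule.mem_top
      exact LinearMap.mem_ker.mp hx
    -- b ∉ p is surjective on ⊤, so b ^ N too; contradiction with hM.1
    apply hM.1
    rw [eq_bot_iff]
    intro x _
    obtain ⟨y, _, hyx⟩ := smul_pow_surjOn (fun z hz => hM.2.2 b hbp z hz) N x Submodule.mem_top
    rw [Submodule.mem_bot, ← hyx, hall y]
  obtain ⟨t, hbot, hqp⟩ := step1
  refine ⟨t, hbot, le_antisymm hqp ?_⟩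
  -- p ⊆ q t
  intro c hc
  by_contra hcq
  rcases hD t with h | hsec
  · exact hbot h
  obtain ⟨n, hn⟩ := hM.2.1 c hc
  -- c surjective on D t
  have hsurj := hsec.2.2 c hcq
  apply hbot
  rw [eq_bot_iff]
  intro x hx
  obtain ⟨y, hy, hyx⟩ := smul_pow_surjOn hsurj n x hx
  rw [Submodule.mem_bot, ← hyx, hn y Submodule.mem_top]


lemma bound_lemma [IsArtinian R A]
    {n : ℕ} {B : Fin n → Submodule R A} {p : Fin n → Ideal R}
    (h : IsMinimalSecondaryRep R A B p)
    (T : Finset (Submodule R A)) (hT : ∀ C ∈ T, IsSumIrredSubmodule R A C)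
    (hTsup : T.sup id = ⊤) : n ≤ T.card := by
  classical
  obtain ⟨hprime, hsec, hinj, hsupB, hirr⟩ := h
  choose q hq1 hq2 using fun (C : {C // C ∈ T}) => sumIrred_secondary (hT C.1 C.2)
  have hmem : ∀ i, p i ∈ Finset.univ.image q := by
    intro i
    set N : Submodule R A := ⨆ j ∈ ({i}ᶜ : Set (Fin n)), B j with hNdef
    have hNne : N ≠ ⊤ := hirr i
    set π : A →ₗ[R] A ⧸ N := N.mkQ with hπ
    have hBiN : B i ⊔ N = ⊤ := by
      rw [eq_top_iff, ← hsupB]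
      refine iSup_le fun j => ?_
      by_cases hj : j = i
      · subst hj; exact le_sup_left
      · exact le_trans (le_iSup₂ (f := fun j _ => B j) j hj) le_sup_right
    have hNmap : N.map π = ⊥ := by
      rw [eq_bot_iff]
      rintro x ⟨y, hy, rfl⟩
      exact (Submodule.Quotient.mk_eq_zero N).mpr hy
    have hmapBi : (B i).map π = ⊤ := by
      have h1 : (B i).map π ⊔ N.map π = ⊤ := by
        rw [← Submodule.map_sup, hBiN, Submodule.map_top, Submodule.range_mkQ]
      rwa [hNmap, sup_bot_eq] at h1
    have htopne : (⊤ : Submodule R (A ⧸ N)) ≠ ⊥ := by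
      have : Nontrivial (A ⧸ N) :=
        Submodule.Quotient.nontrivial_iff.mpr hNne
      exact top_ne_bot
    have hMsec : IsSecondarySubmodule R (A ⧸ N) (p i) ⊤ := by
      rcases (hsec i).map π with hb | hs
      · rw [hmapBi] at hb; exact absurd hb htopne
      · rwa [hmapBi] at hs
    have hsup2 : ⨆ (C : {C // C ∈ T}), (C.1.map π) = ⊤ := by
      rw [← Submodule.map_iSup]
      have hTT : ⨆ (C : {C // C ∈ T}), C.1 = ⊤ := by
        rw [← hTsup, Finset.sup_eq_iSup, iSup_subtype]
        rfl
      rw [hTT, Submodule.map_top, Submodule.range_mkQ]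
    obtain ⟨C, _, hqC⟩ := key_att (hprime i) hMsec
      (fun C : {C // C ∈ T} => C.1.map π) q
      (fun C => (hq2 C).map π) hsup2
    exact Finset.mem_image.mpr ⟨C, Finset.mem_univ C, hqC⟩
  have hsub : Finset.univ.image p ⊆ Finset.univ.image q := by
    intro x hx
    obtain ⟨i, _, rfl⟩ := Finset.mem_image.mp hx
    exact hmem i
  calc n = (Finset.univ.image p).card := by
          rw [Finset.card_image_of_injective _ hinj, Finset.card_univ, Fintype.card_fin]
    _ ≤ (Finset.univ.image q).card := Finset.card_le_card hsub
    _ ≤ Fintype.card {C // C ∈ T} := le_trans Finset.card_image_le (by simp)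
    _ = T.card := Fintype.card_coe T

end Aux

/-- For a Noetherian ring `R` and a nonzero Artinian `R`-module `A`, the sum-reducibility
index of `A` is at least the number of attached primes of `A` (i.e. the number of
components of any minimal secondary representation). -/
theorem card_att_le_coirIndex (R A : Type*) [CommRing R] [IsNoetherianRing R]
    [AddCommGroup A] [Module R A] [IsArtinian R A] [Nontrivial A]
    {n : ℕ} (B : Fin n → Submodule R A) (p : Fin n → Ideal R)
    (h : IsMinimalSecondaryRep R A B p) :
    n ≤ coirIndex R A := by
  classical
  obtain ⟨T0, hT0irr, hT0sup⟩ := exists_sumIrred_decomp (R := R) (A := A) ⊤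
  obtain ⟨T', hT'irr, hT'sup, hT'irred⟩ := exists_irredundant T0 hT0irr hT0sup
  refine le_csInf ⟨T'.card, T', rfl, hT'irr, hT'sup, hT'irred⟩ ?_
  rintro m ⟨T, rfl, hTirr, hTsup, -⟩
  exact bound_lemma h T hTirr hTsup
end

section
/- Let R be a commutative Noetherian ring, A a nonzero Artinian R-module, and A = B_1 + … + B_n a minimal secondary representation of A with B_i p_i-secondary for i = 1, …, n. If B_i is a p_i-minimal embedded component of A for every embedded attached prime p_i of A, then ir'_R(A) = ir'_R(B_1) + … + ir'_R(B_n). -/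
/-- `C` belongs to `Λ'_p(A)`: `C` is a `p`-secondary submodule occurring in some minimal
secondary representation of `A`. -/
def MemSecondaryComponents (R A : Type*) [CommRing R] [AddCommGroup A] [Module R A]
    (p : Ideal R) (C : Submodule R A) : Prop :=
  ∃ (n : ℕ) (B : Fin n → Submodule R A) (q : Fin n → Ideal R),
    IsMinimalSecondaryRep R A B q ∧ ∃ i, q i = p ∧ B i = C

/-- `C` is a `p`-minimal embedded component of `A`: a minimal element of `Λ'_p(A)`
under inclusion. -/
def IsMinimalEmbeddedComponent (R A : Type*) [CommRing R] [AddCommGroup A] [Module R A]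
    (p : Ideal R) (C : Submodule R A) : Prop :=
  MemSecondaryComponents R A p C ∧
    ∀ D : Submodule R A, MemSecondaryComponents R A p D → D ≤ C → D = C

namespace CoirAux
variable {R M : Type*} [CommRing R] [AddCommGroup M] [Module R M]

lemma key2 {C₀ P V X Y : Submodule R M} (hC : IsSumIrredSubmodule R M C₀)
    (hV : C₀ ⊔ P = V) (hPX : P ≤ X) (hPY : P ≤ Y) (hXY : X ⊔ Y = V) : X = V ∨ Y = V := by
  have hXV : X ≤ V := le_sup_left.trans hXY.le
  have hYV : Y ≤ V := le_sup_right.trans hXY.le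
  have hdec : (C₀ ⊓ X) ⊔ (C₀ ⊓ Y) = C₀ := by
    refine le_antisymm (sup_le inf_le_left inf_le_left) ?_
    intro x hx
    have hxV : x ∈ X ⊔ Y := hXY.symm ▸ (hV ▸ (le_sup_left : C₀ ≤ C₀ ⊔ P)) hx
    obtain ⟨u, hu, v, hv, hx_eq⟩ := Submodule.mem_sup.mp hxV
    have huV : u ∈ C₀ ⊔ P := hV.symm ▸ hXV hu
    have hvV : v ∈ C₀ ⊔ P := hV.symm ▸ hYV hv
    obtain ⟨c, hc, p, hp, hu_eq⟩ := Submodule.mem_sup.mp huV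
    obtain ⟨c', hc', p', hp', hv_eq⟩ := Submodule.mem_sup.mp hvV
    have hcX : c ∈ X := by
      have := X.sub_mem hu (hPX hp)
      rwa [← hu_eq, add_sub_cancel_right] at this
    have hc'Y : c' ∈ Y := by
      have := Y.sub_mem hv (hPY hp')
      rwa [← hv_eq, add_sub_cancel_right] at this
    have h1 : x - c' ∈ C₀ ⊓ X := by
      refine ⟨C₀.sub_mem hx hc', ?_⟩
      have hxc : x - c' = c + (p + p') := by rw [← hx_eq, ← hu_eq, ← hv_eq]; abel
      rw [hxc]
      exact X.add_mem hcX (X.add_mem (hPX hp) (hPX hp'))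
    have h2 : x = (x - c') + c' := by abel
    rw [h2]
    exact Submodule.add_mem _ (Submodule.mem_sup_left h1)
      (Submodule.mem_sup_right ⟨hc', hc'Y⟩)
  rcases hC.2 _ _ hdec with h | h
  · left
    have hCX : C₀ ≤ X := by rw [← h]; exact inf_le_right
    exact le_antisymm hXV (hV ▸ sup_le hCX hPX)
  · right
    have hCY : C₀ ≤ Y := by rw [← h]; exact inf_le_right
    exact le_antisymm hYV (hV ▸ sup_le hCY hPY)

lemma exc' {V : Submodule R M} {C₀ : Submodule R M} (hC : IsSumIrredSubmodule R M C₀)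
    (S : Finset (Submodule R M)) :
    ∀ P : Submodule R M, C₀ ⊔ P = V → P ≠ V → S.sup id ⊔ P = V → ∃ D ∈ S, D ⊔ P = V := by
  classical
  induction S using Finset.induction_on with
  | empty =>
    intro P hV hP hS
    simp only [Finset.sup_empty, bot_sup_eq] at hS
    exact absurd hS hP
  | @insert D S hD IH =>
    intro P hV hP hS
    rw [Finset.sup_insert] at hS
    have hXY : (D ⊔ P) ⊔ (S.sup id ⊔ P) = V := by
      rw [← hS]; simp only [id]; rw [sup_sup_sup_comm, sup_idem]
    rcases key2 hC hV le_sup_right le_sup_right hXY with h | h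
    · exact ⟨D, Finset.mem_insert_self _ _, h⟩
    · obtain ⟨D', hD', hD'P⟩ := IH P hV hP h
      exact ⟨D', Finset.mem_insert_of_mem hD', hD'P⟩

lemma step {V : Submodule R M} (S : Finset (Submodule R M))
    (hS2 : S.sup id = V)
    (T : Finset (Submodule R M)) :
    (∀ B ∈ T, IsSumIrredSubmodule R M B) →
    ∀ U : Finset (Submodule R M), T.sup id ⊔ U.sup id = V →
      ∃ U' : Finset (Submodule R M), U' ⊆ S ∧ U'.sup id ⊔ U.sup id = V ∧ U'.card ≤ T.card := by
  classical
  induction T using Finset.induction_on with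
  | empty =>
    intro _ U hU
    exact ⟨∅, Finset.empty_subset _, by simpa using hU, by simp⟩
  | @insert C₀ T hC₀T IH =>
    intro hIrr U hsup
    rw [Finset.sup_insert] at hsup
    set P := T.sup id ⊔ U.sup id with hPdef
    have hCP : C₀ ⊔ P = V := by rw [← hsup]; simp only [id]; rw [sup_assoc]
    by_cases hPV : P = V
    · obtain ⟨U', hU'S, hU'sup, hU'card⟩ :=
        IH (fun B hB => hIrr B (Finset.mem_insert_of_mem hB)) U hPV
      exact ⟨U', hU'S, hU'sup, hU'card.trans (by simp [Finset.card_insert_of_notMem hC₀T])⟩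
    · have hPle : P ≤ V := le_sup_right.trans hCP.le
      obtain ⟨D, hDS, hDP⟩ := exc' (hIrr C₀ (Finset.mem_insert_self _ _)) S P hCP hPV
        (by rw [hS2, sup_eq_left.mpr hPle])
      have hnew : T.sup id ⊔ (insert D U).sup id = V := by
        rw [Finset.sup_insert, ← hDP, hPdef]
        simp only [id]
        ac_rfl
      obtain ⟨U'', hU''S, hU''sup, hU''card⟩ :=
        IH (fun B hB => hIrr B (Finset.mem_insert_of_mem hB)) (insert D U) hnew
      refine ⟨insert D U'', Finset.insert_subset hDS hU''S, ?_, ?_⟩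
      · rw [Finset.sup_insert] at hU''sup ⊢
        rw [← hU''sup]
        simp only [id]
        ac_rfl
      · calc (insert D U'').card ≤ U''.card + 1 := Finset.card_insert_le _ _
          _ ≤ T.card + 1 := by omega
          _ = (insert C₀ T).card := (Finset.card_insert_of_notMem hC₀T).symm
open Classical in
/-- An irredundant representation of `V` as a sum of sum-irreducible submodules. -/
def IsIrredRep (V : Submodule R M) (T : Finset (Submodule R M)) : Prop :=
  (∀ B ∈ T, IsSumIrredSubmodule R M B) ∧ T.sup id = V ∧
    ∀ B ∈ T, (T.erase B).sup id ≠ V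

lemma IsIrredRep.card_le {V : Submodule R M} {S T : Finset (Submodule R M)}
    (hS : IsIrredRep V S) (hT1 : ∀ B ∈ T, IsSumIrredSubmodule R M B)
    (hT2 : T.sup id = V) : S.card ≤ T.card := by
  classical
  obtain ⟨U', hU'S, hU'sup, hU'card⟩ := step S hS.2.1 T hT1 ∅ (by simpa using hT2)
  simp only [Finset.sup_empty, sup_bot_eq] at hU'sup
  have hUS : U' = S := by
    by_contra hne
    obtain ⟨s, hsS, hsU⟩ := Finset.exists_of_ssubset (lt_of_le_of_ne hU'S hne)
    have h1 : U' ⊆ S.erase s := Finset.subset_erase.mpr ⟨hU'S, hsU⟩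
    have h2 : (S.erase s).sup id = V :=
      le_antisymm ((Finset.sup_mono (S.erase_subset s)).trans_eq hS.2.1)
        (hU'sup ▸ Finset.sup_mono h1)
    exact hS.2.2 s hsS h2
  rw [← hUS]; exact hU'card

lemma IsIrredRep.card_eq {V : Submodule R M} {S T : Finset (Submodule R M)}
    (hS : IsIrredRep V S) (hT : IsIrredRep V T) : S.card = T.card :=
  le_antisymm (hS.card_le hT.1 hT.2.1) (hT.card_le hS.1 hS.2.1)

lemma prune {α : Type*} [DecidableEq α] {V : Submodule R M} (f : α → Submodule R M)
    (s : Finset α) (hs : s.sup f = V) :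
    ∃ s' ⊆ s, s'.sup f = V ∧ ∀ x ∈ s', (s'.erase x).sup f ≠ V := by
  classical
  induction s using Finset.strongInduction with
  | _ s IH =>
    by_cases hred : ∀ x ∈ s, (s.erase x).sup f ≠ V
    · exact ⟨s, le_refl _, hs, hred⟩
    · push_neg at hred
      obtain ⟨x, hxs, hx⟩ := hred
      obtain ⟨s', hs's, h1, h2⟩ := IH (s.erase x) (Finset.erase_ssubset hxs) hx
      exact ⟨s', hs's.trans (Finset.erase_subset _ _), h1, h2⟩

lemma exists_sumirred_rep [IsArtinian R M] (V : Submodule R M) :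
    ∃ T : Finset (Submodule R M), (∀ B ∈ T, IsSumIrredSubmodule R M B) ∧ T.sup id = V := by
  classical
  induction V using WellFoundedLT.induction with
  | _ V IH =>
    by_cases hbot : V = ⊥
    · exact ⟨∅, by simp, by simp [hbot]⟩
    by_cases hirr : IsSumIrredSubmodule R M V
    · exact ⟨{V}, by simpa using hirr, by simp⟩
    · have : ∃ C D : Submodule R M, C ⊔ D = V ∧ C ≠ V ∧ D ≠ V := by
        by_contra hcon
        push_neg at hcon
        exact hirr ⟨hbot, fun C D hCD => by
          by_cases hC : C = V
          · exact Or.inl hC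
          · exact Or.inr (hcon C D hCD hC)⟩
      obtain ⟨C, D, hCD, hC, hD⟩ := this
      have hCV : C < V := lt_of_le_of_ne (le_sup_left.trans_eq hCD) hC
      have hDV : D < V := lt_of_le_of_ne (le_sup_right.trans_eq hCD) hD
      obtain ⟨T₁, hT₁, hT₁sup⟩ := IH C hCV
      obtain ⟨T₂, hT₂, hT₂sup⟩ := IH D hDV
      refine ⟨T₁ ∪ T₂, fun B hB => ?_, by rw [Finset.sup_union, hT₁sup, hT₂sup, hCD]⟩
      rcases Finset.mem_union.mp hB with h | h
      · exact hT₁ B h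
      · exact hT₂ B h

lemma exists_irredRep [IsArtinian R M] (V : Submodule R M) :
    ∃ T : Finset (Submodule R M), IsIrredRep V T := by
  classical
  obtain ⟨T, h1, h2⟩ := exists_sumirred_rep V
  obtain ⟨T', hT'T, h3, h4⟩ := prune id T h2
  exact ⟨T', fun B hB => h1 B (hT'T hB), h3, h4⟩


section Secondary

/-- scalar multiplication as a linear map -/
noncomputable abbrev lsm (a : R) : M →ₗ[R] M := LinearMap.lsmul R M a

lemma map_lsm_le (a : R) (X : Submodule R M) : Submodule.map (lsm a) X ≤ X := by
  rintro _ ⟨x, hx, rfl⟩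
  exact X.smul_mem a hx

lemma map_lsm_mul (a b : R) (X : Submodule R M) :
    Submodule.map (lsm (a * b)) X = Submodule.map (lsm a) (Submodule.map (lsm b) X) := by
  rw [← Submodule.map_comp]
  congr 1
  ext x
  simp only [LinearMap.lsmul_apply, LinearMap.comp_apply, mul_smul, smul_comm a b x]

lemma sec_surj {q : Ideal R} {W : Submodule R M} (hW : IsSecondarySubmodule R M q W)
    {a : R} (ha : a ∉ q) : Submodule.map (lsm a) W = W := by
  refine le_antisymm (map_lsm_le a W) fun x hx => ?_
  obtain ⟨y, hy, hxy⟩ := hW.2.2 a ha x hx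
  exact ⟨y, hy, hxy⟩

lemma sec_surj_pow {q : Ideal R} {W : Submodule R M} (hW : IsSecondarySubmodule R M q W)
    {a : R} (ha : a ∉ q) (k : ℕ) : Submodule.map (lsm (a ^ k)) W = W := by
  induction k with
  | zero => simpa using le_antisymm (map_lsm_le _ _) (fun x hx => ⟨x, hx, one_smul R x⟩)
  | succ k IH => rw [pow_succ, map_lsm_mul, sec_surj hW ha, IH]

lemma sec_nilp {q : Ideal R} {W : Submodule R M} (hW : IsSecondarySubmodule R M q W)
    {a : R} (ha : a ∈ q) : ∃ k, Submodule.map (lsm (a ^ k)) W = ⊥ := by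
  obtain ⟨k, hk⟩ := hW.2.1 a ha
  refine ⟨k, le_bot_iff.mp ?_⟩
  rintro _ ⟨x, hx, rfl⟩
  simpa using hk x hx

lemma sec_sup {q : Ideal R} {W₁ W₂ : Submodule R M} (h₁ : IsSecondarySubmodule R M q W₁)
    (h₂ : IsSecondarySubmodule R M q W₂) : IsSecondarySubmodule R M q (W₁ ⊔ W₂) := by
  refine ⟨fun hbot => h₁.1 (le_bot_iff.mp (le_sup_left.trans_eq hbot)), fun a ha => ?_,
    fun a ha x hx => ?_⟩
  · obtain ⟨n₁, hn₁⟩ := h₁.2.1 a ha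
    obtain ⟨n₂, hn₂⟩ := h₂.2.1 a ha
    refine ⟨n₁ + n₂, fun x hx => ?_⟩
    obtain ⟨x₁, hx₁, x₂, hx₂, rfl⟩ := Submodule.mem_sup.mp hx
    have e1 : a ^ (n₁ + n₂) • x₁ = 0 := by
      rw [add_comm, pow_add, mul_smul, hn₁ x₁ hx₁, smul_zero]
    have e2 : a ^ (n₁ + n₂) • x₂ = 0 := by
      rw [pow_add, mul_smul, hn₂ x₂ hx₂, smul_zero]
    rw [smul_add, e1, e2, add_zero]
  · obtain ⟨x₁, hx₁, x₂, hx₂, rfl⟩ := Submodule.mem_sup.mp hx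
    obtain ⟨y₁, hy₁, hxy₁⟩ := h₁.2.2 a ha x₁ hx₁
    obtain ⟨y₂, hy₂, hxy₂⟩ := h₂.2.2 a ha x₂ hx₂
    exact ⟨y₁ + y₂, Submodule.add_mem _ (Submodule.mem_sup_left hy₁)
      (Submodule.mem_sup_right hy₂), by rw [smul_add, hxy₁, hxy₂]⟩

lemma sec_finset_sup {q : Ideal R} {α : Type*} (s : Finset α) (f : α → Submodule R M)
    (hne : s.Nonempty) (h : ∀ x ∈ s, IsSecondarySubmodule R M q (f x)) :
    IsSecondarySubmodule R M q (s.sup f) := by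
  classical
  induction hne using Finset.Nonempty.cons_induction with
  | singleton a => simpa using h a (by simp)
  | cons a s ha hs IH =>
    rw [Finset.sup_cons]
    exact sec_sup (h a (Finset.mem_cons_self a s))
      (IH fun x hx => h x (Finset.mem_cons_of_mem hx))

/-- The canonical "attached prime" of a submodule. -/
noncomputable def att (W : Submodule R M) : Ideal R := W.annihilator.radical

lemma att_eq {q : Ideal R} {W : Submodule R M} (hW : IsSecondarySubmodule R M q W) :
    att W = q := by
  ext a
  rw [att, Ideal.mem_radical_iff]
  constructor
  · rintro ⟨n, hn⟩
    by_contra ha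
    rw [Submodule.mem_annihilator] at hn
    obtain ⟨x, hx, hx0⟩ := (Submodule.ne_bot_iff W).mp hW.1
    rw [← sec_surj_pow hW ha n] at hx
    obtain ⟨y, hy, rfl⟩ := hx
    exact hx0 (by simpa using hn y hy)
  · intro ha
    obtain ⟨n, hn⟩ := hW.2.1 a ha
    exact ⟨n, Submodule.mem_annihilator.mpr hn⟩

lemma sumirred_att_secondary [IsArtinian R M] {C : Submodule R M}
    (hC : IsSumIrredSubmodule R M C) :
    (att C).IsPrime ∧ IsSecondarySubmodule R M (att C) C := by
  have dicho : ∀ a : R, a ∈ att C ∨ Submodule.map (lsm a) C = C := by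
    intro a
    obtain ⟨n, hn⟩ := IsArtinian.monotone_stabilizes (R := R) (M := M)
      ⟨fun k => OrderDual.toDual (Submodule.map (lsm (a ^ k)) C), by
        intro k m hkm
        simp only [OrderDual.toDual_le_toDual]
        have : a ^ m = a ^ (m - k) * a ^ k := by rw [← pow_add]; congr 1; omega
        rw [this, map_lsm_mul]
        exact map_lsm_le _ _⟩
    set k := n + 1 with hk
    have hstab : Submodule.map (lsm (a ^ k)) C = Submodule.map (lsm (a ^ (2 * k))) C := by
      have h1 := hn k (by omega)
      have h2 := hn (2 * k) (by omega)
      exact (OrderDual.toDual_inj.mp h1).symm.trans (OrderDual.toDual_inj.mp h2)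
    have hfit : (Submodule.map (lsm (a ^ k)) C) ⊔ (C ⊓ LinearMap.ker (lsm (a ^ k))) = C := by
      refine le_antisymm (sup_le (map_lsm_le _ _) inf_le_left) fun x hx => ?_
      have hax : a ^ k • x ∈ Submodule.map (lsm (a ^ (2 * k))) C := by
        rw [← hstab]; exact ⟨x, hx, rfl⟩
      obtain ⟨y, hy, hxy⟩ := hax
      have hz : (a ^ k • y : M) ∈ Submodule.map (lsm (a ^ k)) C := ⟨y, hy, rfl⟩
      have hdiff : x - a ^ k • y ∈ C ⊓ LinearMap.ker (lsm (a ^ k)) := by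
        have hker : (a ^ k) • (x - a ^ k • y) = 0 := by
          rw [smul_sub, smul_smul, ← pow_add]
          have h2k : k + k = 2 * k := by omega
          have hxy' : a ^ (2 * k) • y = a ^ k • x := by simpa using hxy
          rw [h2k, hxy', sub_self]
        exact Submodule.mem_inf.mpr ⟨C.sub_mem hx (C.smul_mem _ hy), by simpa using hker⟩
      have : x = a ^ k • y + (x - a ^ k • y) := by abel
      rw [this]
      exact Submodule.add_mem _ (Submodule.mem_sup_left hz) (Submodule.mem_sup_right hdiff)
    rcases hC.2 _ _ hfit with h | h
    · right
      have h1 : Submodule.map (lsm a) C ≤ C := map_lsm_le _ _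
      have h2 : C ≤ Submodule.map (lsm a) C := by
        conv_lhs => rw [← h]
        rw [hk, pow_succ, mul_comm, map_lsm_mul]
        exact Submodule.map_mono (map_lsm_le _ _)
      exact le_antisymm h1 h2
    · left
      rw [att, Ideal.mem_radical_iff]
      refine ⟨k, Submodule.mem_annihilator.mpr fun x hx => ?_⟩
      have : x ∈ C ⊓ LinearMap.ker (lsm (a ^ k)) := h.symm ▸ hx
      simpa using this.2
  have hmapC : ∀ a : R, a ∉ att C → Submodule.map (lsm a) C = C := fun a ha =>
    (dicho a).resolve_left ha
  have hprime : (att C).IsPrime := by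
    constructor
    · intro htop
      have h1 : (1 : R) ∈ att C := htop ▸ Submodule.mem_top
      rw [att, Ideal.mem_radical_iff] at h1
      obtain ⟨n, hn⟩ := h1
      rw [Submodule.mem_annihilator] at hn
      exact hC.1 (le_bot_iff.mp fun x hx => by simpa using hn x hx)
    · intro a b hab
      by_contra hcon
      push_neg at hcon
      have ha := hmapC a hcon.1
      have hb := hmapC b hcon.2
      have habC : ∀ m : ℕ, Submodule.map (lsm ((a * b) ^ m)) C = C := by
        intro m
        induction m with
        | zero => exact le_antisymm (map_lsm_le _ _) (fun x hx => ⟨x, hx, by simp⟩)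
        | succ m IH => rw [pow_succ, map_lsm_mul, map_lsm_mul a b, hb, ha, IH]
      rw [att, Ideal.mem_radical_iff] at hab
      obtain ⟨m, hm⟩ := hab
      rw [Submodule.mem_annihilator] at hm
      refine hC.1 (le_bot_iff.mp fun x hx => ?_)
      have : x ∈ Submodule.map (lsm ((a * b) ^ m)) C := (habC m).symm ▸ hx
      obtain ⟨y, hy, rfl⟩ := this
      simpa using hm y hy
  refine ⟨hprime, hC.1, fun a ha => ?_, fun a ha x hx => ?_⟩
  · rw [att, Ideal.mem_radical_iff] at ha
    obtain ⟨n, hn⟩ := ha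
    exact ⟨n, Submodule.mem_annihilator.mp hn⟩
  · have := hmapC a ha
    rw [← this] at hx
    obtain ⟨y, hy, rfl⟩ := hx
    exact ⟨y, hy, rfl⟩

end Secondary


section Quot

/-- `A/N` is a (nonzero) module on which every `a ∈ p` is nilpotent and every
`a ∉ p` is surjective. -/
def SecQuot (p : Ideal R) (N : Submodule R M) : Prop :=
  N ≠ ⊤ ∧ (∀ a ∈ p, ∃ k : ℕ, ∀ x : M, a ^ k • x ∈ N) ∧ ∀ a ∉ p, ∀ x : M, ∃ y, x - a • y ∈ N

lemma secQuot_surj_pow {p : Ideal R} {N : Submodule R M} (hN : SecQuot p N)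
    {a : R} (ha : a ∉ p) : ∀ e : ℕ, ∀ x : M, ∃ y, x - a ^ e • y ∈ N := by
  intro e
  induction e with
  | zero => exact fun x => ⟨x, by simpa using N.zero_mem⟩
  | succ e IH =>
    intro x
    obtain ⟨y₁, hy₁⟩ := IH x
    obtain ⟨y₂, hy₂⟩ := hN.2.2 a ha y₁
    refine ⟨y₂, ?_⟩
    have : x - a ^ (e + 1) • y₂ = (x - a ^ e • y₁) + a ^ e • (y₁ - a • y₂) := by
      rw [smul_sub, smul_smul, ← pow_succ]; abel
    rw [this]
    exact N.add_mem hy₁ (N.smul_mem _ hy₂)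

lemma U1 {n : ℕ} {B : Fin n → Submodule R M} {p : Fin n → Ideal R}
    (h : IsMinimalSecondaryRep R M B p) (i : Fin n) :
    SecQuot (p i) (⨆ j ∈ ({i}ᶜ : Set (Fin n)), B j) := by
  set N := ⨆ j ∈ ({i}ᶜ : Set (Fin n)), B j with hN
  have hdecomp : ∀ x : M, x ∈ B i ⊔ N := by
    intro x
    have hx : x ∈ (⨆ j, B j) := h.2.2.2.1.symm ▸ Submodule.mem_top
    refine (iSup_le fun j => ?_ : (⨆ j, B j) ≤ B i ⊔ N) hx
    by_cases hj : j = i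
    · exact hj ▸ le_sup_left
    · exact le_trans (le_biSup B (by simpa using hj)) le_sup_right
  refine ⟨h.2.2.2.2 i, fun a ha => ?_, fun a ha x => ?_⟩
  · obtain ⟨k, hk⟩ := (h.2.1 i).2.1 a ha
    refine ⟨k, fun x => ?_⟩
    obtain ⟨b, hb, y, hy, rfl⟩ := Submodule.mem_sup.mp (hdecomp x)
    rw [smul_add, hk b hb, zero_add]
    exact N.smul_mem _ hy
  · obtain ⟨b, hb, y, hy, rfl⟩ := Submodule.mem_sup.mp (hdecomp x)
    obtain ⟨c, hc, hac⟩ := (h.2.1 i).2.2 a ha b hb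
    exact ⟨c, by rw [← hac]; simpa using hy⟩

lemma U2 {n : ℕ} {B : Fin n → Submodule R M} {p : Fin n → Ideal R}
    (hsec : ∀ i, IsSecondarySubmodule R M (p i) (B i)) (hsup : (⨆ i, B i) = ⊤)
    {q : Ideal R} (hq : q.IsPrime) {N : Submodule R M} (hN : SecQuot q N) :
    ∃ i, p i = q := by
  classical
  set Jf : Finset (Fin n) := Finset.univ.filter (fun i => ¬ B i ≤ N) with hJf
  have hJne : Jf.Nonempty := by
    rw [Finset.filter_nonempty_iff]
    by_contra hcon
    push_neg at hcon
    exact hN.1 (top_unique (hsup ▸ iSup_le fun i => hcon i (Finset.mem_univ i)))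
  -- every i ∈ Jf satisfies q ≤ p i
  have hqle : ∀ i ∈ Jf, q ≤ p i := by
    intro i hi a haq
    by_contra hap
    obtain ⟨k, hk⟩ := hN.2.1 a haq
    have : B i ≤ N := by
      intro x hx
      rw [← sec_surj_pow (hsec i) hap k] at hx
      obtain ⟨y, hy, rfl⟩ := hx
      simpa using hk y
    rw [hJf] at hi
    exact (Finset.mem_filter.mp hi).2 this
  -- some i ∈ Jf satisfies p i ≤ q
  have hple : ∃ i ∈ Jf, p i ≤ q := by
    by_contra hcon
    push_neg at hcon
    choose aa haa haq using fun (i : Fin n) (hi : i ∈ Jf) => SetLike.not_le_iff_exists.mp (hcon i hi)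
    set b : R := ∏ i ∈ Jf.attach, aa i.1 i.2 with hb
    have hbq : b ∉ q := by
      intro hbq
      obtain ⟨i, _, hiq⟩ := (Ideal.IsPrime.prod_mem_iff (hp := hq)).mp hbq
      exact haq _ _ hiq
    -- b kills every B i for i ∈ Jf after high enough power
    choose kk hkk using fun (i : Fin n) (hi : i ∈ Jf) =>
      sec_nilp (hsec i) (a := b) (by
        have : aa i hi ∈ p i := haa i hi
        have hfac : b = aa i hi * ∏ j ∈ Jf.attach.erase ⟨i, hi⟩, aa j.1 j.2 := by
          rw [hb, ← Finset.mul_prod_erase _ _ (Finset.mem_attach _ ⟨i, hi⟩)]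
        rw [hfac]
        exact Ideal.mul_mem_right _ _ this)
    set E : ℕ := ∑ i ∈ Jf.attach, kk i.1 i.2 with hE
    have hkill : ∀ i, Submodule.map (lsm (b ^ E)) (B i) ≤ N := by
      intro i
      by_cases hi : i ∈ Jf
      · have hle : kk i hi ≤ E := Finset.single_le_sum
          (f := fun (j : {x // x ∈ Jf}) => kk j.1 j.2) (fun _ _ => Nat.zero_le _)
          (Finset.mem_attach _ ⟨i, hi⟩)
        have : b ^ E = b ^ (E - kk i hi) * b ^ (kk i hi) := by
          rw [← pow_add]; congr 1; omega
        rw [this, map_lsm_mul, hkk i hi]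
        simp
      · have : B i ≤ N := by
          rw [hJf] at hi
          simpa using (by simpa [hJf] using hi : ¬¬ B i ≤ N)
        exact (map_lsm_le _ _).trans this
    have hall : ∀ x : M, b ^ E • x ∈ N := by
      intro x
      have hxt : x ∈ (⨆ i, B i) := hsup.symm ▸ Submodule.mem_top
      have : Submodule.map (lsm (b ^ E)) (⨆ i, B i) ≤ N := by
        rw [Submodule.map_iSup]
        exact iSup_le hkill
      exact this ⟨x, hxt, rfl⟩
    obtain ⟨i, hi⟩ := hJne
    refine hN.1 (top_unique fun x _ => ?_)
    obtain ⟨y, hy⟩ := secQuot_surj_pow hN hbq E x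
    have : x = (x - b ^ E • y) + b ^ E • y := by abel
    rw [this]
    exact N.add_mem hy (hall y)
  obtain ⟨i, hi, hpq⟩ := hple
  exact ⟨i, le_antisymm hpq (hqle i hi)⟩

end Quot


section Rep

lemma finset_erase_sup {n : ℕ} (B : Fin n → Submodule R M) (i : Fin n) :
    (Finset.univ.erase i).sup B = ⨆ j ∈ ({i}ᶜ : Set (Fin n)), B j := by
  refine le_antisymm (Finset.sup_le fun j hj => ?_) ?_
  · exact le_biSup B (by simpa using (Finset.mem_erase.mp hj).1)
  · refine iSup_le fun j => iSup_le fun hj => ?_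
    exact Finset.le_sup (Finset.mem_erase.mpr ⟨by simpa using hj, Finset.mem_univ j⟩)

lemma secRep_of_finset [DecidableEq (Ideal R)] (Q : Finset (Ideal R)) (H : Ideal R → Submodule R M)
    (h1 : ∀ q ∈ Q, (q : Ideal R).IsPrime) (h2 : ∀ q ∈ Q, IsSecondarySubmodule R M q (H q))
    (h3 : Q.sup H = ⊤) (h4 : ∀ q ∈ Q, (Q.erase q).sup H ≠ ⊤) :
    IsMinimalSecondaryRep R M (fun i : Fin Q.card => H ((Q.equivFin.symm i) : Ideal R))
      (fun i : Fin Q.card => ((Q.equivFin.symm i) : Ideal R)) := by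
  classical
  set e := Q.equivFin with he
  refine ⟨fun i => h1 _ (e.symm i).2, fun i => h2 _ (e.symm i).2,
    Subtype.coe_injective.comp e.symm.injective, ?_, ?_⟩
  · have h5 : (⨆ i : Fin Q.card, H ((e.symm i) : Ideal R)) = ⨆ x : {x // x ∈ Q}, H ↑x :=
      e.symm.iSup_comp (g := fun x : {x // x ∈ Q} => H ↑x)
    rw [h5, iSup_subtype, ← Finset.sup_eq_iSup]
    exact h3
  · intro i₀ htop
    refine h4 ((e.symm i₀) : Ideal R) (e.symm i₀).2 (top_unique ?_)
    rw [← htop]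
    refine iSup_le fun j => iSup_le fun hj => ?_
    have hne : ((e.symm j) : Ideal R) ≠ ((e.symm i₀) : Ideal R) := by
      intro hcon
      exact (by simpa using hj : j ≠ i₀) (e.symm.injective (Subtype.ext hcon))
    exact Finset.le_sup (Finset.mem_erase.mpr ⟨hne, (e.symm j).2⟩)

lemma map_pow_eq_bot_of_le {a : R} {W : Submodule R M} {k E : ℕ}
    (hk : Submodule.map (lsm (a ^ k)) W = ⊥) (hkE : k ≤ E) :
    Submodule.map (lsm (a ^ E)) W = ⊥ := by
  have hsplit : a ^ E = a ^ (E - k) * a ^ k := by rw [← pow_add]; congr 1; omega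
  rw [hsplit, map_lsm_mul, hk]
  exact le_bot_iff.mp (map_lsm_le _ _)

end Rep

section Core

variable [IsArtinian R M]

lemma core {n : ℕ} {B : Fin n → Submodule R M} {p : Fin n → Ideal R}
    (h : IsMinimalSecondaryRep R M B p)
    (hmin : ∀ i : Fin n, (∃ j, p j < p i) → IsMinimalEmbeddedComponent R M (p i) (B i))
    (i : Fin n) (F : Finset (Submodule R M))
    (hF : ∀ C ∈ F, IsSumIrredSubmodule R M C ∧ C ≤ B i)
    (hD : F.sup id ≠ B i) :
    F.sup id ⊔ (⨆ j ∈ ({i}ᶜ : Set (Fin n)), B j) ≠ ⊤ := by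
  classical
  intro htop
  set U := ⨆ j ∈ ({i}ᶜ : Set (Fin n)), B j with hU
  set D := F.sup id with hDdef
  have hDle : D ≤ B i := Finset.sup_le fun C hC => (hF C hC).2
  by_cases hemb : ∃ j, p j < p i
  · -- embedded case
    set members : Finset (Submodule R M) := F ∪ (Finset.univ.erase i).image B with hmem
    have hmem_sec : ∀ W ∈ members, (att W).IsPrime ∧ IsSecondarySubmodule R M (att W) W := by
      intro W hW
      rcases Finset.mem_union.mp hW with hWF | hWB
      · exact sumirred_att_secondary (hF W hWF).1
      · obtain ⟨j, hj, rfl⟩ := Finset.mem_image.mp hWB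
        have hsec := h.2.1 j
        rw [att_eq hsec]
        exact ⟨h.1 j, hsec⟩
    set Q : Finset (Ideal R) := members.image att with hQ
    set H : Ideal R → Submodule R M :=
      fun q => (members.filter (fun W => att W = q)).sup id with hH
    have hQ1 : ∀ q ∈ Q, (q : Ideal R).IsPrime := by
      intro q hq
      obtain ⟨W, hW, rfl⟩ := Finset.mem_image.mp hq
      exact (hmem_sec W hW).1
    have hQ2 : ∀ q ∈ Q, IsSecondarySubmodule R M q (H q) := by
      intro q hq
      obtain ⟨W, hW, rfl⟩ := Finset.mem_image.mp hq
      refine sec_finset_sup _ _ ⟨W, Finset.mem_filter.mpr ⟨hW, rfl⟩⟩ fun X hX => ?_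
      obtain ⟨hXmem, hXatt⟩ := Finset.mem_filter.mp hX
      have := (hmem_sec X hXmem).2
      rwa [hXatt] at this
    have hpart : Q.sup H = members.sup id := by
      refine le_antisymm (Finset.sup_le fun q hq => Finset.sup_le fun W hW =>
        Finset.le_sup (Finset.mem_filter.mp hW).1) (Finset.sup_le fun W hW => ?_)
      have hWH : (W : Submodule R M) ≤ H (att W) :=
        Finset.le_sup (f := id) (Finset.mem_filter.mpr ⟨hW, rfl⟩)
      exact hWH.trans (Finset.le_sup (Finset.mem_image_of_mem att hW))
    have hQ3 : Q.sup H = ⊤ := by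
      rw [hpart, hmem, Finset.sup_union, Finset.sup_image]
      have h6 : (Finset.univ.erase i).sup (id ∘ B) = U := by
        rw [hU, ← finset_erase_sup B i]
        exact Finset.sup_congr rfl (fun _ _ => rfl)
      rw [h6, ← hDdef]
      exact htop
    obtain ⟨Q', hQ'Q, hQ'3, hQ'4⟩ := prune H Q hQ3
    have hrep := secRep_of_finset Q' H (fun q hq => hQ1 q (hQ'Q hq))
      (fun q hq => hQ2 q (hQ'Q hq)) hQ'3 hQ'4
    obtain ⟨k, hk⟩ := U2 (fun j => hrep.2.1 j) hrep.2.2.2.1 (h.1 i) (U1 h i)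
    have hmemSC : MemSecondaryComponents R M (p i) (H (p i)) := by
      refine ⟨Q'.card, _, _, hrep, k, hk, ?_⟩
      rw [hk]
    have hHle : H (p i) ≤ D := by
      refine Finset.sup_le fun W hW => ?_
      obtain ⟨hWmem, hWatt⟩ := Finset.mem_filter.mp hW
      rcases Finset.mem_union.mp hWmem with hWF | hWB
      · exact Finset.le_sup (f := id) hWF
      · obtain ⟨j, hj, rfl⟩ := Finset.mem_image.mp hWB
        have : p j = p i := by rw [← att_eq (h.2.1 j), hWatt]
        exact absurd (h.2.2.1 this) (Finset.mem_erase.mp hj).1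
    have hBD := (hmin i hemb).2 (H (p i)) hmemSC (hHle.trans hDle)
    exact hD (le_antisymm hDle (hBD ▸ hHle))
  · -- minimal case
    have hex : ∀ j : Fin n, j ≠ i → ∃ a ∈ p j, a ∉ p i := by
      intro j hj
      refine SetLike.not_le_iff_exists.mp fun hle => ?_
      exact hemb ⟨j, lt_of_le_of_ne hle (fun hc => hj (h.2.2.1 hc))⟩
    set Jf := Finset.univ.erase i with hJf
    choose aa haa haq using fun (j : {x // x ∈ Jf}) =>
      hex j.1 (Finset.mem_erase.mp j.2).1
    set b : R := ∏ j ∈ Jf.attach, aa j with hb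
    have hbq : b ∉ p i := by
      intro hbq
      obtain ⟨j, _, hjq⟩ := (Ideal.IsPrime.prod_mem_iff (hp := h.1 i)).mp hbq
      exact haq _ hjq
    have hbj : ∀ (j : {x // x ∈ Jf}), b ∈ p j.1 := by
      intro j
      have hfac : b = aa j * ∏ l ∈ Jf.attach.erase j, aa l := by
        rw [hb, ← Finset.mul_prod_erase _ _ (Finset.mem_attach _ j)]
      rw [hfac]
      exact Ideal.mul_mem_right _ _ (haa j)
    choose kk hkk using fun (j : {x // x ∈ Jf}) => sec_nilp (h.2.1 j.1) (hbj j)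
    set E : ℕ := ∑ j ∈ Jf.attach, kk j with hE
    have hkillj : ∀ (j : Fin n), j ≠ i → Submodule.map (lsm (b ^ E)) (B j) = ⊥ := by
      intro j hj
      have hjJ : j ∈ Jf := Finset.mem_erase.mpr ⟨hj, Finset.mem_univ j⟩
      refine map_pow_eq_bot_of_le (hkk ⟨j, hjJ⟩) ?_
      exact Finset.single_le_sum (f := fun (l : {x // x ∈ Jf}) => kk l)
        (fun _ _ => Nat.zero_le _) (Finset.mem_attach _ ⟨j, hjJ⟩)
    have hith : Submodule.map (lsm (b ^ E)) (B i) = B i := sec_surj_pow (h.2.1 i) hbq E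
    have htopmap : Submodule.map (lsm (b ^ E)) (⊤ : Submodule R M) = B i := by
      rw [← h.2.2.2.1, Submodule.map_iSup]
      refine le_antisymm (iSup_le fun j => ?_) ?_
      · by_cases hj : j = i
        · rw [hj, hith]
        · rw [hkillj j hj]; exact bot_le
      · rw [← hith]; exact le_iSup (fun j => Submodule.map (lsm (b ^ E)) (B j)) i
    have hle : Submodule.map (lsm (b ^ E)) (⊤ : Submodule R M) ≤ D := by
      rw [← htop, Submodule.map_sup]
      refine sup_le ((map_lsm_le _ _).trans le_rfl) ?_
      rw [hU, Submodule.map_iSup]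
      refine iSup_le fun j => ?_
      rw [Submodule.map_iSup]
      refine iSup_le fun hj => ?_
      rw [hkillj j (by simpa using hj)]
      exact bot_le
    rw [htopmap] at hle
    exact hD (le_antisymm hDle hle)

end Core


section Transfer

lemma coirIndex_eq_card {T : Finset (Submodule R M)} (hT : IsIrredRep (⊤ : Submodule R M) T) :
    coirIndex R M = T.card := by
  classical
  have hmem : T.card ∈ {k | ∃ T : Finset (Submodule R M), T.card = k ∧
      (∀ B ∈ T, IsSumIrredSubmodule R M B) ∧ T.sup id = ⊤ ∧
      ∀ B ∈ T, (T.erase B).sup id ≠ ⊤} := ⟨T, rfl, hT.1, hT.2.1, hT.2.2⟩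
  have huniq : ∀ k ∈ {k | ∃ T : Finset (Submodule R M), T.card = k ∧
      (∀ B ∈ T, IsSumIrredSubmodule R M B) ∧ T.sup id = ⊤ ∧
      ∀ B ∈ T, (T.erase B).sup id ≠ ⊤}, k = T.card := by
    rintro k ⟨T', h1, h2, h3, h4⟩
    rw [← h1]
    exact IsIrredRep.card_eq ⟨h2, h3, h4⟩ hT
  refine le_antisymm (Nat.sInf_le hmem) ?_
  exact (huniq _ (Nat.sInf_mem ⟨T.card, hmem⟩)).ge

lemma coirIndex_submodule_eq_card (W : Submodule R M) {T : Finset (Submodule R M)}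
    (hT : IsIrredRep W T) : coirIndex R ↥W = T.card := by
  classical
  set f : Submodule R ↥W → Submodule R M := Submodule.map W.subtype with hf
  have finj : Function.Injective f := Submodule.map_injective_of_injective W.injective_subtype
  have ftop : f ⊤ = W := Submodule.map_subtype_top W
  have hmapsup : ∀ S : Finset (Submodule R ↥W), f (S.sup id) = (S.image f).sup id := by
    intro S
    rw [Finset.sup_image]
    induction S using Finset.cons_induction with
    | empty =>
      simp only [Finset.sup_empty]
      exact Submodule.map_bot W.subtype
    | cons a S ha IH =>
      simp only [Finset.sup_cons, id_eq, Function.comp_apply] at IH ⊢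
      rw [hf] at IH ⊢
      rw [Submodule.map_sup, IH]
  have hfc : ∀ C ∈ T, f (Submodule.comap W.subtype C) = C := by
    intro C hC
    rw [hf, Submodule.map_comap_subtype]
    exact inf_eq_right.mpr ((Finset.le_sup (f := id) hC).trans hT.2.1.le)
  have hirr_of : ∀ X : Submodule R ↥W, IsSumIrredSubmodule R M (f X) →
      IsSumIrredSubmodule R ↥W X := by
    intro X hX
    refine ⟨fun hb => hX.1 (by rw [hb, hf, Submodule.map_bot]), fun C D hCD => ?_⟩
    rcases hX.2 (f C) (f D) (by rw [← Submodule.map_sup, hCD]) with hc | hc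
    · exact Or.inl (finj hc)
    · exact Or.inr (finj hc)
  set T' : Finset (Submodule R ↥W) := T.image (Submodule.comap W.subtype) with hT'
  have himg : T'.image f = T := by
    rw [hT', Finset.image_image]
    refine Finset.image_congr (fun C hC => hfc C hC) |>.trans Finset.image_id
  have hcard : T'.card = T.card := by
    refine le_antisymm Finset.card_image_le ?_
    calc T.card = (T'.image f).card := by rw [himg]
      _ ≤ T'.card := Finset.card_image_le
  have hmemT' : ∀ X ∈ T', f X ∈ T ∧ f (Submodule.comap W.subtype (f X)) = f X := by
    intro X hX
    obtain ⟨C, hC, rfl⟩ := Finset.mem_image.mp hX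
    rw [hfc C hC]
    exact ⟨hC, hfc C hC⟩
  have hsup' : T'.sup id = ⊤ := by
    apply finj
    rw [hmapsup, himg, hT.2.1, ftop]
  have hrepT' : IsIrredRep (⊤ : Submodule R ↥W) T' := by
    refine ⟨fun X hX => ?_, hsup', fun X hX htop' => ?_⟩
    · refine hirr_of X ?_
      obtain ⟨hfXT, _⟩ := hmemT' X hX
      exact hT.1 _ hfXT
    · obtain ⟨hfXT, _⟩ := hmemT' X hX
      refine hT.2.2 (f X) hfXT (le_antisymm
        ((Finset.sup_mono (T.erase_subset (f X))).trans hT.2.1.le) ?_)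
      have hsub : (T'.erase X).image f ⊆ T.erase (f X) := by
        intro Y hY
        obtain ⟨Y', hY', rfl⟩ := Finset.mem_image.mp hY
        obtain ⟨hY'e, hY'T'⟩ := Finset.mem_erase.mp hY'
        exact Finset.mem_erase.mpr ⟨fun hc => hY'e (finj hc), (hmemT' Y' hY'T').1⟩
      calc W = f ⊤ := ftop.symm
        _ = f ((T'.erase X).sup id) := by rw [htop']
        _ = ((T'.erase X).image f).sup id := hmapsup _
        _ ≤ (T.erase (f X)).sup id := Finset.sup_mono hsub
  rw [coirIndex_eq_card hrepT', hcard]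

end Transfer

end CoirAux

/-- Let `A = B 0 + … + B (n-1)` be a minimal secondary representation of a nonzero Artinian
module `A` over a Noetherian ring, with `B i` being `p i`-secondary. If `B i` is a
`p i`-minimal embedded component of `A` for every embedded attached prime `p i`, then
`ir'_R(A) = ir'_R(B 0) + … + ir'_R(B (n-1))`. -/
theorem coirIndex_eq_sum_coirIndex (R A : Type*) [CommRing R] [IsNoetherianRing R]
    [AddCommGroup A] [Module R A] [IsArtinian R A] [Nontrivial A]
    {n : ℕ} (B : Fin n → Submodule R A) (p : Fin n → Ideal R)
    (h : IsMinimalSecondaryRep R A B p)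
    (hmin : ∀ i : Fin n, (∃ j, p j < p i) → IsMinimalEmbeddedComponent R A (p i) (B i)) :
    coirIndex R A = ∑ i : Fin n, coirIndex R (B i) := by
  classical
  choose S hS using fun i : Fin n => CoirAux.exists_irredRep (M := A) (B i)
  set T : Finset (Submodule R A) := Finset.univ.biUnion S with hT
  have hpieces : ∀ C ∈ T, IsSumIrredSubmodule R A C := by
    intro C hC
    obtain ⟨i, _, hCi⟩ := Finset.mem_biUnion.mp hC
    exact (hS i).1 C hCi
  have hCle : ∀ (i : Fin n), ∀ C ∈ S i, C ≤ B i := fun i C hC =>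
    (Finset.le_sup (f := id) hC).trans (hS i).2.1.le
  have hsupT : T.sup id = ⊤ := by
    rw [hT, Finset.sup_biUnion]
    rw [Finset.sup_congr rfl (fun i _ => (hS i).2.1)]
    rw [Finset.sup_univ_eq_iSup]
    exact h.2.2.2.1
  have hcore := CoirAux.core h hmin
  have hirrT : ∀ C ∈ T, (T.erase C).sup id ≠ ⊤ := by
    intro C hC htop
    obtain ⟨i₀, _, hCi₀⟩ := Finset.mem_biUnion.mp hC
    have hDne : ((S i₀).erase C).sup id ≠ B i₀ := (hS i₀).2.2 C hCi₀
    have hFprop : ∀ X ∈ (S i₀).erase C, IsSumIrredSubmodule R A X ∧ X ≤ B i₀ := fun X hX =>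
      ⟨(hS i₀).1 X (Finset.mem_of_mem_erase hX), hCle i₀ X (Finset.mem_of_mem_erase hX)⟩
    refine hcore i₀ ((S i₀).erase C) hFprop hDne (top_unique ?_)
    rw [← htop]
    refine Finset.sup_le fun X hX => ?_
    obtain ⟨hXC, hXT⟩ := Finset.mem_erase.mp hX
    obtain ⟨l, _, hXl⟩ := Finset.mem_biUnion.mp hXT
    by_cases hl : l = i₀
    · subst hl
      exact le_trans (Finset.le_sup (f := id) (Finset.mem_erase.mpr ⟨hXC, hXl⟩)) le_sup_left
    · exact le_trans ((hCle l X hXl).trans (le_biSup B (by simpa using hl))) le_sup_right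
  have hdisj : ∀ i j : Fin n, i ≠ j → Disjoint (S i) (S j) := by
    intro i j hij
    rw [Finset.disjoint_left]
    intro C hCi hCj
    have hDne : ((S i).erase C).sup id ≠ B i := (hS i).2.2 C hCi
    have hFprop : ∀ X ∈ (S i).erase C, IsSumIrredSubmodule R A X ∧ X ≤ B i := fun X hX =>
      ⟨(hS i).1 X (Finset.mem_of_mem_erase hX), hCle i X (Finset.mem_of_mem_erase hX)⟩
    refine hcore i ((S i).erase C) hFprop hDne (top_unique ?_)
    rw [← hsupT]
    refine Finset.sup_le fun X hX => ?_
    obtain ⟨l, _, hXl⟩ := Finset.mem_biUnion.mp hX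
    by_cases hl : l = i
    · subst hl
      by_cases hXC : X = C
      · subst hXC
        exact le_trans ((hCle j X hCj).trans (le_biSup B (by simpa using hij.symm)))
          le_sup_right
      · exact le_trans (Finset.le_sup (f := id) (Finset.mem_erase.mpr ⟨hXC, hXl⟩)) le_sup_left
    · exact le_trans ((hCle l X hXl).trans (le_biSup B (by simpa using hl))) le_sup_right
  have hrepT : CoirAux.IsIrredRep (⊤ : Submodule R A) T := ⟨hpieces, hsupT, hirrT⟩
  rw [CoirAux.coirIndex_eq_card hrepT, hT,
    Finset.card_biUnion (fun i _ j _ hij => hdisj i j hij)]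
  refine Finset.sum_congr rfl fun i _ => ?_
  exact (CoirAux.coirIndex_submodule_eq_card (B i) (hS i)).symm
end
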